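/- arXiv:2511.01538 — 4 statements merged into one kernel-verified Lean document; each statement's English description precedes it below -/
import Mathlib

section
/- Let P and Z be real symmetric n×n matrices such that R(P) and R(P+Z) are invertible. Then G(P+Z) = G(P) + Z A_{K(P)} + A_{K(P)}^T Z + Σ_{l=1}^r C_{l,K(P)}^T Z C_{l,K(P)} − N(P,Z)^T R(P+Z)^{-1} N(P,Z). -/
open Matrix BigOperators

noncomputable section

/-- Mean-square stability of the tuple `(F, G_1, …, G_r)` via the Lyapunov characterization. -/
def MSStable {n r : ℕ} (F : Matrix (Fin n) (Fin n) ℝ)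
    (G : Fin r → Matrix (Fin n) (Fin n) ℝ) : Prop :=
  ∃ X : Matrix (Fin n) (Fin n) ℝ, X.PosDef ∧
    (-(X * F + Fᵀ * X + ∑ l, (G l)ᵀ * X * G l)).PosDef

/-- Stochastic detectability of the system `[E_0, …, E_r; F, G_1, …, G_r]`. -/
def StochDetectable {n q r : ℕ} (E0 : Matrix (Fin q) (Fin n) ℝ)
    (E : Fin r → Matrix (Fin q) (Fin n) ℝ)
    (F : Matrix (Fin n) (Fin n) ℝ) (G : Fin r → Matrix (Fin n) (Fin n) ℝ) : Prop :=
  ∃ Θ : Matrix (Fin n) (Fin q) ℝ, MSStable (F + Θ * E0) (fun l => G l + Θ * E l)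

/-- The data of the zero-sum linear-quadratic stochastic differential game. -/
structure GameData (n m1 m2 r : ℕ) where
  A : Matrix (Fin n) (Fin n) ℝ
  C : Fin r → Matrix (Fin n) (Fin n) ℝ
  B1 : Matrix (Fin n) (Fin m1) ℝ
  B2 : Matrix (Fin n) (Fin m2) ℝ
  D1 : Fin r → Matrix (Fin n) (Fin m1) ℝ
  D2 : Fin r → Matrix (Fin n) (Fin m2) ℝ
  Q : Matrix (Fin n) (Fin n) ℝ
  hQ : Q.IsSymm
  S1 : Matrix (Fin m1) (Fin n) ℝ
  S2 : Matrix (Fin m2) (Fin n) ℝ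
  R11 : Matrix (Fin m1) (Fin m1) ℝ
  R22 : Matrix (Fin m2) (Fin m2) ℝ
  R12 : Matrix (Fin m1) (Fin m2) ℝ
  hR11 : R11.IsSymm
  hR22 : R22.IsSymm

namespace GameData

variable {n m1 m2 r : ℕ} (g : GameData n m1 m2 r)

/-- The stacked weighting matrix `S = [S_1; S_2]`. -/
def Sw : Matrix (Fin m1 ⊕ Fin m2) (Fin n) ℝ := fromRows g.S1 g.S2

/-- The full weighting matrix `R = [[R_11, R_12],[R_21, R_22]]` with `R_21 = R_12ᵀ`. -/
def Rw : Matrix (Fin m1 ⊕ Fin m2) (Fin m1 ⊕ Fin m2) ℝ :=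
  fromBlocks g.R11 g.R12 g.R12ᵀ g.R22

/-- `S_1(P) = B_1ᵀ P + Σ_l D_{l,1}ᵀ P C_l + S_1`. -/
def S1P (P : Matrix (Fin n) (Fin n) ℝ) : Matrix (Fin m1) (Fin n) ℝ :=
  g.B1ᵀ * P + ∑ l, (g.D1 l)ᵀ * P * g.C l + g.S1

/-- `S_2(P) = B_2ᵀ P + Σ_l D_{l,2}ᵀ P C_l + S_2`. -/
def S2P (P : Matrix (Fin n) (Fin n) ℝ) : Matrix (Fin m2) (Fin n) ℝ :=
  g.B2ᵀ * P + ∑ l, (g.D2 l)ᵀ * P * g.C l + g.S2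

/-- `S(P) = [S_1(P); S_2(P)]`. -/
def SP (P : Matrix (Fin n) (Fin n) ℝ) : Matrix (Fin m1 ⊕ Fin m2) (Fin n) ℝ :=
  fromRows (g.S1P P) (g.S2P P)

/-- `R_11(P)`. -/
def R11P (P : Matrix (Fin n) (Fin n) ℝ) : Matrix (Fin m1) (Fin m1) ℝ :=
  g.R11 + ∑ l, (g.D1 l)ᵀ * P * g.D1 l

/-- `R_12(P)`. -/
def R12P (P : Matrix (Fin n) (Fin n) ℝ) : Matrix (Fin m1) (Fin m2) ℝ :=
  g.R12 + ∑ l, (g.D1 l)ᵀ * P * g.D2 l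

/-- `R_21(P)`. -/
def R21P (P : Matrix (Fin n) (Fin n) ℝ) : Matrix (Fin m2) (Fin m1) ℝ :=
  g.R12ᵀ + ∑ l, (g.D2 l)ᵀ * P * g.D1 l

/-- `R_22(P)`. -/
def R22P (P : Matrix (Fin n) (Fin n) ℝ) : Matrix (Fin m2) (Fin m2) ℝ :=
  g.R22 + ∑ l, (g.D2 l)ᵀ * P * g.D2 l

/-- `R(P)` assembled from its blocks. -/
def RP (P : Matrix (Fin n) (Fin n) ℝ) : Matrix (Fin m1 ⊕ Fin m2) (Fin m1 ⊕ Fin m2) ℝ :=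
  fromBlocks (g.R11P P) (g.R12P P) (g.R21P P) (g.R22P P)

/-- `K(P) = −R(P)⁻¹ S(P)` (stacked feedback gain). -/
def KP (P : Matrix (Fin n) (Fin n) ℝ) : Matrix (Fin m1 ⊕ Fin m2) (Fin n) ℝ :=
  -((g.RP P)⁻¹ * g.SP P)

/-- `K_1(P)`: the first block of `K(P)`. -/
def K1 (P : Matrix (Fin n) (Fin n) ℝ) : Matrix (Fin m1) (Fin n) ℝ :=
  (g.KP P).submatrix Sum.inl id

/-- `K_2(P)`: the second block of `K(P)`. -/
def K2 (P : Matrix (Fin n) (Fin n) ℝ) : Matrix (Fin m2) (Fin n) ℝ :=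
  (g.KP P).submatrix Sum.inr id

/-- `G(P) = PA + AᵀP + Σ_l C_lᵀ P C_l + Q − S(P)ᵀ R(P)⁻¹ S(P)`. -/
def GP (P : Matrix (Fin n) (Fin n) ℝ) : Matrix (Fin n) (Fin n) ℝ :=
  P * g.A + g.Aᵀ * P + ∑ l, (g.C l)ᵀ * P * g.C l + g.Q
    - (g.SP P)ᵀ * (g.RP P)⁻¹ * g.SP P

/-- `A_{K(P)} = A + B_1 K_1(P) + B_2 K_2(P)`. -/
def AK (P : Matrix (Fin n) (Fin n) ℝ) : Matrix (Fin n) (Fin n) ℝ :=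
  g.A + g.B1 * g.K1 P + g.B2 * g.K2 P

/-- `C_{l,K(P)} = C_l + D_{l,1} K_1(P) + D_{l,2} K_2(P)`. -/
def CK (P : Matrix (Fin n) (Fin n) ℝ) (l : Fin r) : Matrix (Fin n) (Fin n) ℝ :=
  g.C l + g.D1 l * g.K1 P + g.D2 l * g.K2 P

/-- `N_1(P,Z)`. -/
def N1 (P Z : Matrix (Fin n) (Fin n) ℝ) : Matrix (Fin m1) (Fin n) ℝ :=
  g.B1ᵀ * Z + ∑ l, (g.D1 l)ᵀ * Z * g.CK P l

/-- `N_2(P,Z)`. -/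
def N2 (P Z : Matrix (Fin n) (Fin n) ℝ) : Matrix (Fin m2) (Fin n) ℝ :=
  g.B2ᵀ * Z + ∑ l, (g.D2 l)ᵀ * Z * g.CK P l

/-- `N(P,Z) = [N_1(P,Z); N_2(P,Z)]`. -/
def NP (P Z : Matrix (Fin n) (Fin n) ℝ) : Matrix (Fin m1 ⊕ Fin m2) (Fin n) ℝ :=
  fromRows (g.N1 P Z) (g.N2 P Z)

/-- Membership in `Dom G`: `R_22(P) ≻ 0` and `R_11(P) ≺ 0`. -/
def MemDomG (P : Matrix (Fin n) (Fin n) ℝ) : Prop :=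
  (g.R22P P).PosDef ∧ (-(g.R11P P)).PosDef

/-- `Z` satisfies the inner Riccati equation at `P`. -/
def InnerRiccati (P Z : Matrix (Fin n) (Fin n) ℝ) : Prop :=
  g.GP P + Z * g.AK P + (g.AK P)ᵀ * Z + ∑ l, (g.CK P l)ᵀ * Z * g.CK P l
    - (g.N2 P Z)ᵀ * (g.R22P (P + Z))⁻¹ * g.N2 P Z = 0

/-- `A_L = A + B_1 K_1(0) + B_2 K_2(0) + B_2 L`. -/
def AL (L : Matrix (Fin m2) (Fin n) ℝ) : Matrix (Fin n) (Fin n) ℝ :=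
  g.A + g.B1 * g.K1 0 + g.B2 * g.K2 0 + g.B2 * L

/-- `C_{lL} = C_l + D_{l,1} K_1(0) + D_{l,2} K_2(0) + D_{l,2} L`. -/
def CL (L : Matrix (Fin m2) (Fin n) ℝ) (l : Fin r) : Matrix (Fin n) (Fin n) ℝ :=
  g.C l + g.D1 l * g.K1 0 + g.D2 l * g.K2 0 + g.D2 l * L

/-- `Q_L = Q − S(0)ᵀ R(0)⁻¹ S(0) + Lᵀ R_22 L`. -/
def QL (L : Matrix (Fin m2) (Fin n) ℝ) : Matrix (Fin n) (Fin n) ℝ :=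
  g.Q - (g.SP 0)ᵀ * (g.RP 0)⁻¹ * g.SP 0 + Lᵀ * g.R22 * L

/-- `S_L = R_12 L`. -/
def SL (L : Matrix (Fin m2) (Fin n) ℝ) : Matrix (Fin m1) (Fin n) ℝ := g.R12 * L

/-- The linear term `B_1ᵀ P + Σ_l D_{l,1}ᵀ P C_{lL} + S_L` in the `L`-Riccati equation. -/
def S1L (L : Matrix (Fin m2) (Fin n) ℝ) (P : Matrix (Fin n) (Fin n) ℝ) :
    Matrix (Fin m1) (Fin n) ℝ :=
  g.B1ᵀ * P + ∑ l, (g.D1 l)ᵀ * P * g.CL L l + g.SL L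

/-- Left-hand side of the algebraic Riccati equation associated with `L`. -/
def AREL (L : Matrix (Fin m2) (Fin n) ℝ) (P : Matrix (Fin n) (Fin n) ℝ) :
    Matrix (Fin n) (Fin n) ℝ :=
  P * g.AL L + (g.AL L)ᵀ * P + ∑ l, (g.CL L l)ᵀ * P * g.CL L l + g.QL L
    - (g.S1L L P)ᵀ * (g.R11P P)⁻¹ * g.S1L L P

/-- `K_L(P) = −(R_11 + Σ_l D_{l,1}ᵀ P D_{l,1})⁻¹ (B_1ᵀ P + Σ_l D_{l,1}ᵀ P C_{lL} + S_L)`. -/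
def KL (L : Matrix (Fin m2) (Fin n) ℝ) (P : Matrix (Fin n) (Fin n) ℝ) :
    Matrix (Fin m1) (Fin n) ℝ :=
  -((g.R11P P)⁻¹ * g.S1L L P)

/-- `P̃` is a stabilizing solution of the `L`-Riccati equation. -/
def IsStabSolL (L : Matrix (Fin m2) (Fin n) ℝ) (P : Matrix (Fin n) (Fin n) ℝ) : Prop :=
  P.IsSymm ∧ g.AREL L P = 0 ∧ (-(g.R11P P)).PosDef ∧
    MSStable (g.AL L + g.B1 * g.KL L P) (fun l => g.CL L l + g.D1 l * g.KL L P)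

/-- `L ∈ 𝒜`. -/
def MemA (L : Matrix (Fin m2) (Fin n) ℝ) : Prop :=
  MSStable (g.AL L) (g.CL L) ∧ ∃ P, g.IsStabSolL L P

end GameData


section helpers
variable {R : Type*} [AddCommMonoid R] {m₁ m₂ n₁ n₂ ι : Type*}

lemma fromRows_add' (A₁ : Matrix m₁ n₁ R) (A₂ : Matrix m₂ n₁ R) (B₁ : Matrix m₁ n₁ R)
    (B₂ : Matrix m₂ n₁ R) : fromRows A₁ A₂ + fromRows B₁ B₂ = fromRows (A₁ + B₁) (A₂ + B₂) := by
  ext (i|i) j <;> simp [fromRows_apply_inl, fromRows_apply_inr]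

lemma sum_fromRows (s : Finset ι) (f : ι → Matrix m₁ n₁ R) (g : ι → Matrix m₂ n₁ R) :
    ∑ i ∈ s, fromRows (f i) (g i) = fromRows (∑ i ∈ s, f i) (∑ i ∈ s, g i) := by
  ext (i|i) j <;> simp [fromRows_apply_inl, fromRows_apply_inr, Matrix.sum_apply]

lemma fromBlocks_add' (A₁ : Matrix m₁ n₁ R) (B₁ : Matrix m₁ n₂ R) (C₁ : Matrix m₂ n₁ R)
    (D₁ : Matrix m₂ n₂ R) (A₂ : Matrix m₁ n₁ R) (B₂ : Matrix m₁ n₂ R) (C₂ : Matrix m₂ n₁ R)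
    (D₂ : Matrix m₂ n₂ R) :
    fromBlocks A₁ B₁ C₁ D₁ + fromBlocks A₂ B₂ C₂ D₂ =
      fromBlocks (A₁+A₂) (B₁+B₂) (C₁+C₂) (D₁+D₂) := by
  ext (i|i) (j|j) <;> simp

lemma sum_fromBlocks (s : Finset ι) (A : ι → Matrix m₁ n₁ R) (B : ι → Matrix m₁ n₂ R)
    (C : ι → Matrix m₂ n₁ R) (D : ι → Matrix m₂ n₂ R) :
    ∑ i ∈ s, fromBlocks (A i) (B i) (C i) (D i) =
      fromBlocks (∑ i ∈ s, A i) (∑ i ∈ s, B i) (∑ i ∈ s, C i) (∑ i ∈ s, D i) := by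
  ext (i|i) (j|j) <;> simp [Matrix.sum_apply]

omit [AddCommMonoid R] in
lemma fromRows_fromColumns (A : Matrix m₁ n₁ R) (B : Matrix m₁ n₂ R) (C : Matrix m₂ n₁ R)
    (D : Matrix m₂ n₂ R) :
    fromRows (fromCols A B) (fromCols C D) = fromBlocks A B C D := by
  ext (i|i) (j|j) <;> rfl

omit [AddCommMonoid R] in
lemma fromColumns_fromRows' (A : Matrix m₁ n₁ R) (B : Matrix m₁ n₂ R) (C : Matrix m₂ n₁ R)
    (D : Matrix m₂ n₂ R) :
    fromCols (fromRows A C) (fromRows B D) = fromBlocks A B C D := by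
  ext (i|i) (j|j) <;> rfl

end helpers

namespace GameData

variable {n m1 m2 r : ℕ} (g : GameData n m1 m2 r)

/-- Stacked input matrix. -/
def Bc : Matrix (Fin n) (Fin m1 ⊕ Fin m2) ℝ := fromCols g.B1 g.B2

/-- Stacked diffusion input matrices. -/
def Dc (l : Fin r) : Matrix (Fin n) (Fin m1 ⊕ Fin m2) ℝ := fromCols (g.D1 l) (g.D2 l)

lemma SP_eq (P : Matrix (Fin n) (Fin n) ℝ) :
    g.SP P = g.Bcᵀ * P + (∑ l, (g.Dc l)ᵀ * P * g.C l) + g.Sw := by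
  simp only [SP, S1P, S2P, Sw, Bc, Dc, transpose_fromCols, fromRows_mul,
    sum_fromRows, fromRows_add']

lemma RP_eq (P : Matrix (Fin n) (Fin n) ℝ) :
    g.RP P = g.Rw + ∑ l, (g.Dc l)ᵀ * P * g.Dc l := by
  simp only [RP, R11P, R12P, R21P, R22P, Rw, Dc, transpose_fromCols, fromRows_mul,
    mul_fromCols, fromRows_fromColumns, fromColumns_fromRows', sum_fromBlocks, fromBlocks_add']

lemma NP_eq (P Z : Matrix (Fin n) (Fin n) ℝ) :
    g.NP P Z = g.Bcᵀ * Z + ∑ l, (g.Dc l)ᵀ * Z * g.CK P l := by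
  simp only [NP, N1, N2, Bc, Dc, transpose_fromCols, fromRows_mul,
    sum_fromRows, fromRows_add']

lemma AK_eq (P : Matrix (Fin n) (Fin n) ℝ) : g.AK P = g.A + g.Bc * g.KP P := by
  have h : g.KP P = fromRows (g.K1 P) (g.K2 P) := (fromRows_toRows _).symm
  rw [AK, Bc, h, fromCols_mul_fromRows, add_assoc]

lemma CK_eq (P : Matrix (Fin n) (Fin n) ℝ) (l : Fin r) :
    g.CK P l = g.C l + g.Dc l * g.KP P := by
  have h : g.KP P = fromRows (g.K1 P) (g.K2 P) := (fromRows_toRows _).symm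
  rw [CK, Dc, h, fromCols_mul_fromRows, add_assoc]

lemma Rw_symm : g.Rwᵀ = g.Rw := by
  rw [Rw, fromBlocks_transpose, transpose_transpose, g.hR11.eq, g.hR22.eq]

lemma RP_symm (P : Matrix (Fin n) (Fin n) ℝ) (hP : P.IsSymm) : (g.RP P)ᵀ = g.RP P := by
  rw [g.RP_eq P, transpose_add, Matrix.transpose_sum, g.Rw_symm]
  congr 1
  refine Finset.sum_congr rfl fun l _ => ?_
  rw [transpose_mul, transpose_mul, transpose_transpose, hP.eq, Matrix.mul_assoc]

end GameData

/-- Taylor-type expansion of `G` at `P` in direction `Z`. -/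
theorem statement2 {n m1 m2 r : ℕ} (g : GameData n m1 m2 r)
    (P Z : Matrix (Fin n) (Fin n) ℝ) (hP : P.IsSymm) (hZ : Z.IsSymm)
    (hRP : IsUnit (g.RP P).det) (hRPZ : IsUnit (g.RP (P + Z)).det) :
    g.GP (P + Z) =
      g.GP P + Z * g.AK P + (g.AK P)ᵀ * Z
      + ∑ l, (g.CK P l)ᵀ * Z * g.CK P l
      - (g.NP P Z)ᵀ * (g.RP (P + Z))⁻¹ * g.NP P Z := by
    classical
  set SZ : Matrix (Fin m1 ⊕ Fin m2) (Fin n) ℝ :=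
    g.Bcᵀ * Z + ∑ l, (g.Dc l)ᵀ * Z * g.C l with hSZdef
  set RZ : Matrix (Fin m1 ⊕ Fin m2) (Fin m1 ⊕ Fin m2) ℝ :=
    ∑ l, (g.Dc l)ᵀ * Z * g.Dc l with hRZdef
  set K := g.KP P with hKdef
  set N := g.NP P Z with hNdef
  have hR' : g.RP (P + Z) = g.RP P + RZ := by
    rw [g.RP_eq (P + Z), g.RP_eq P, hRZdef]
    simp only [Matrix.mul_add, Matrix.add_mul, Finset.sum_add_distrib]
    abel
  have hS' : g.SP (P + Z) = g.SP P + SZ := by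
    rw [g.SP_eq (P + Z), g.SP_eq P, hSZdef]
    simp only [Matrix.mul_add, Matrix.add_mul, Finset.sum_add_distrib]
    abel
  have hNeq : N = SZ + RZ * K := by
    rw [hNdef, g.NP_eq, hSZdef, hRZdef, hKdef]
    simp only [GameData.CK_eq, Matrix.mul_add, Finset.sum_add_distrib, ← Matrix.mul_assoc,
      ← Matrix.sum_mul]
    abel
  have hRK : g.RP P * K = -(g.SP P) := by
    rw [hKdef, GameData.KP, Matrix.mul_neg, ← Matrix.mul_assoc, Matrix.mul_nonsing_inv _ hRP,
      Matrix.one_mul]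
  have hRsym : (g.RP P)ᵀ = g.RP P := g.RP_symm P hP
  have hR'sym : (g.RP (P + Z))ᵀ = g.RP (P + Z) := g.RP_symm (P + Z) (hP.add hZ)
  have hRZsym : RZᵀ = RZ := by
    rw [hRZdef, Matrix.transpose_sum]
    refine Finset.sum_congr rfl fun l _ => ?_
    rw [transpose_mul, transpose_mul, transpose_transpose, hZ.eq, Matrix.mul_assoc]
  have hS'2 : g.SP (P + Z) = N - g.RP (P + Z) * K := by
    rw [hS', hNeq, hR', Matrix.add_mul, hRK]
    abel
  have hinv1 : g.RP (P + Z) * (g.RP (P + Z))⁻¹ = 1 := Matrix.mul_nonsing_inv _ hRPZ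
  have hinv2 : (g.RP (P + Z))⁻¹ * g.RP (P + Z) = 1 := Matrix.nonsing_inv_mul _ hRPZ
  have e1 : (g.RP (P + Z))⁻¹ * (g.RP (P + Z) * K) = K := by
    rw [← Matrix.mul_assoc, hinv2, Matrix.one_mul]
  have e2 : ∀ M : Matrix (Fin m1 ⊕ Fin m2) (Fin n) ℝ,
      g.RP (P + Z) * ((g.RP (P + Z))⁻¹ * M) = M := fun M => by
    rw [← Matrix.mul_assoc, hinv1, Matrix.one_mul]
  have hquad : (N - g.RP (P + Z) * K)ᵀ * (g.RP (P + Z))⁻¹ * (N - g.RP (P + Z) * K)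
      = Nᵀ * (g.RP (P + Z))⁻¹ * N - Nᵀ * K - Kᵀ * N + Kᵀ * g.RP (P + Z) * K := by
    rw [transpose_sub, transpose_mul, hR'sym]
    simp only [Matrix.sub_mul, Matrix.mul_sub, Matrix.mul_assoc, e1, e2]
    simp only [← Matrix.mul_assoc]
    abel
  have hquad2 : (g.SP P)ᵀ * (g.RP P)⁻¹ * g.SP P = Kᵀ * g.RP P * K := by
    have hSp : g.SP P = -(g.RP P * K) := by rw [hRK, neg_neg]
    have e : (g.RP P)⁻¹ * (g.RP P * K) = K := by
      rw [← Matrix.mul_assoc, Matrix.nonsing_inv_mul _ hRP, Matrix.one_mul]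
    rw [hSp, transpose_neg, transpose_mul, hRsym]
    simp only [Matrix.neg_mul, Matrix.mul_neg, neg_neg, Matrix.mul_assoc, e]
  have hCKsum : ∑ l, (g.CK P l)ᵀ * Z * g.CK P l
      = ∑ l, (g.C l)ᵀ * Z * g.C l + (∑ l, (g.C l)ᵀ * Z * g.Dc l) * K
        + Kᵀ * (∑ l, (g.Dc l)ᵀ * Z * g.C l) + Kᵀ * RZ * K := by
    rw [hRZdef, hKdef]
    simp only [GameData.CK_eq, transpose_add, transpose_mul, Matrix.add_mul, Matrix.mul_add,
      Finset.sum_add_distrib, Matrix.mul_sum, Matrix.sum_mul, ← Matrix.mul_assoc]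
    abel
  have hSZT : SZᵀ = Z * g.Bc + ∑ l, (g.C l)ᵀ * Z * g.Dc l := by
    rw [hSZdef, transpose_add, transpose_mul, transpose_transpose, hZ.eq,
      Matrix.transpose_sum]
    congr 1
    refine Finset.sum_congr rfl fun l _ => ?_
    rw [transpose_mul, transpose_mul, transpose_transpose, hZ.eq, Matrix.mul_assoc]
  have hNT : Nᵀ = SZᵀ + Kᵀ * RZ := by
    rw [hNeq, transpose_add, transpose_mul, hRZsym]
  simp only [GameData.GP]
  rw [hS'2, hquad, hquad2, hCKsum, g.AK_eq P, ← hKdef, hNT, hSZT, hNeq, hR', hSZdef]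
  simp only [transpose_add, transpose_mul, Matrix.mul_add, Matrix.add_mul,
    Finset.sum_add_distrib]
  simp only [← Matrix.mul_assoc]
  abel
end
end

section
/- Let P and Z be real symmetric n×n matrices such that R(0), R(P), R(P+Z), R_22(P+Z) and the Schur complement R#_22(P+Z) = R_11(P+Z) − R_12(P+Z) R_22(P+Z)^{-1} R_21(P+Z) are invertible, and let L ∈ ℝ^{m2×n} be arbitrary. Set J(P) = [K_1(P) − K_1(0); L] (stacked), K̂(P+Z) = K(P+Z) − K(0), and Δ = J(P) − K̂(P+Z). Then Δ^T R(P+Z) Δ = (N_1(P,Z) − R_12(P+Z) R_22(P+Z)^{-1} N_2(P,Z))^T (R#_22(P+Z))^{-1} (N_1(P,Z) − R_12(P+Z) R_22(P+Z)^{-1} N_2(P,Z)) + Δ^T [[R_12(P+Z) R_22(P+Z)^{-1} R_21(P+Z), R_12(P+Z)],[R_21(P+Z), R_22(P+Z)]] Δ. -/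
open Matrix BigOperators

noncomputable section

lemma fromRows_add_aux {m₁ m₂ n : ℕ} (A₁ B₁ : Matrix (Fin m₁) (Fin n) ℝ)
    (A₂ B₂ : Matrix (Fin m₂) (Fin n) ℝ) :
    fromRows A₁ A₂ + fromRows B₁ B₂ = fromRows (A₁ + B₁) (A₂ + B₂) := by
  ext (i | i) j <;> simp

/-- decomposition of the quadratic form `Δᵀ R(P+Z) Δ` where
`Δ = J(P) − K̂(P+Z)`, `J(P) = [K_1(P) − K_1(0); L]` and `K̂(P+Z) = K(P+Z) − K(0)`. -/
theorem statement6 {n m1 m2 r : ℕ} (g : GameData n m1 m2 r)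
    (P Z : Matrix (Fin n) (Fin n) ℝ) (hP : P.IsSymm) (hZ : Z.IsSymm)
    (hR0 : IsUnit (g.RP 0).det)
    (hRP : IsUnit (g.RP P).det) (hRPZ : IsUnit (g.RP (P + Z)).det)
    (hR22 : IsUnit (g.R22P (P + Z)).det)
    (hSchur : IsUnit (g.R11P (P + Z)
      - g.R12P (P + Z) * (g.R22P (P + Z))⁻¹ * g.R21P (P + Z)).det)
    (L : Matrix (Fin m2) (Fin n) ℝ) :
    (fromRows (g.K1 P - g.K1 0) L - (g.KP (P + Z) - g.KP 0))ᵀ * g.RP (P + Z)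
        * (fromRows (g.K1 P - g.K1 0) L - (g.KP (P + Z) - g.KP 0))
      = (g.N1 P Z - g.R12P (P + Z) * (g.R22P (P + Z))⁻¹ * g.N2 P Z)ᵀ
          * (g.R11P (P + Z) - g.R12P (P + Z) * (g.R22P (P + Z))⁻¹ * g.R21P (P + Z))⁻¹
          * (g.N1 P Z - g.R12P (P + Z) * (g.R22P (P + Z))⁻¹ * g.N2 P Z)
        + (fromRows (g.K1 P - g.K1 0) L - (g.KP (P + Z) - g.KP 0))ᵀ
          * fromBlocks (g.R12P (P + Z) * (g.R22P (P + Z))⁻¹ * g.R21P (P + Z))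
              (g.R12P (P + Z)) (g.R21P (P + Z)) (g.R22P (P + Z))
          * (fromRows (g.K1 P - g.K1 0) L - (g.KP (P + Z) - g.KP 0)) := by
    classical
  -- Abbreviations
  set R11' := g.R11P (P + Z) with hR11'
  set R12' := g.R12P (P + Z) with hR12'
  set R21' := g.R21P (P + Z) with hR21'
  set R22' := g.R22P (P + Z) with hR22'
  set Sc := R11' - R12' * R22'⁻¹ * R21' with hSc
  set d1 := g.K1 P - g.K1 (P + Z) with hd1
  set d2 := g.K2 P - g.K2 (P + Z) with hd2
  set D2' := L - (g.K2 (P + Z) - g.K2 0) with hD2'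
  set W := g.N1 P Z - R12' * R22'⁻¹ * g.N2 P Z with hW
  have hXsym : (P + Z)ᵀ = P + Z := by
    rw [Matrix.transpose_add, hP.eq, hZ.eq]
  -- the matrix Δ as a fromRows
  have hDelta : fromRows (g.K1 P - g.K1 0) L - (g.KP (P + Z) - g.KP 0)
      = fromRows d1 D2' := by
    ext (i | i) j <;>
      simp [hd1, hD2', GameData.K1, GameData.K2, Matrix.sub_apply] <;> ring
  -- R(P+Z) decomposition
  have hRPZsplit : g.RP (P + Z) = g.RP P +
      fromBlocks (∑ l, (g.D1 l)ᵀ * Z * g.D1 l) (∑ l, (g.D1 l)ᵀ * Z * g.D2 l)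
        (∑ l, (g.D2 l)ᵀ * Z * g.D1 l) (∑ l, (g.D2 l)ᵀ * Z * g.D2 l) := by
    rw [GameData.RP, GameData.RP, Matrix.fromBlocks_add]
    simp only [GameData.R11P, GameData.R12P, GameData.R21P, GameData.R22P,
      Matrix.mul_add, Matrix.add_mul, Finset.sum_add_distrib]
    congr 1 <;> abel
  have hKrows : ∀ X : Matrix (Fin n) (Fin n) ℝ, g.KP X = fromRows (g.K1 X) (g.K2 X) := by
    intro X
    exact (Matrix.fromRows_toRows (g.KP X)).symm
  have hRKPZ : g.RP (P + Z) * g.KP (P + Z) = -(g.SP (P + Z)) := by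
    rw [GameData.KP, Matrix.mul_neg, ← Matrix.mul_assoc,
      Matrix.mul_nonsing_inv _ hRPZ, Matrix.one_mul]
  have hRKP : g.RP P * g.KP P = -(g.SP P) := by
    rw [GameData.KP, Matrix.mul_neg, ← Matrix.mul_assoc,
      Matrix.mul_nonsing_inv _ hRP, Matrix.one_mul]
  -- key identity: R(P+Z) * (K(P) - K(P+Z)) = N(P,Z)
  have hKey : g.RP (P + Z) * fromRows d1 d2 = fromRows (g.N1 P Z) (g.N2 P Z) := by
    have : fromRows d1 d2 = g.KP P - g.KP (P + Z) := by
      rw [hKrows P, hKrows (P + Z)]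
      ext (i | i) j <;> simp [hd1, hd2, Matrix.sub_apply]
    rw [this, Matrix.mul_sub, hRKPZ, hRPZsplit, Matrix.add_mul, hRKP,
      hKrows P, Matrix.fromBlocks_mul_fromRows]
    simp only [GameData.SP, GameData.NP, sub_neg_eq_add]
    rw [Matrix.fromRows_neg, fromRows_add_aux, fromRows_add_aux,
      Matrix.fromRows_ext_iff]
    constructor
    · simp only [GameData.S1P, GameData.N1, GameData.CK, Matrix.mul_add,
        Matrix.add_mul, Finset.sum_add_distrib, Matrix.sum_mul, Matrix.mul_assoc]
      abel
    · simp only [GameData.S2P, GameData.N2, GameData.CK, Matrix.mul_add,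
        Matrix.add_mul, Finset.sum_add_distrib, Matrix.sum_mul, Matrix.mul_assoc]
      abel
  have hRPZblocks : g.RP (P + Z) = fromBlocks R11' R12' R21' R22' := rfl
  rw [hRPZblocks, Matrix.fromBlocks_mul_fromRows, Matrix.fromRows_ext_iff] at hKey
  obtain ⟨hrow1, hrow2⟩ := hKey
  -- derive d2 from the second row
  have hd2eq : d2 = R22'⁻¹ * g.N2 P Z - R22'⁻¹ * (R21' * d1) := by
    have h := congrArg (fun M => R22'⁻¹ * M) hrow2
    simp only [Matrix.mul_add, ← Matrix.mul_assoc,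
      Matrix.nonsing_inv_mul _ hR22, Matrix.one_mul] at h
    rw [Matrix.mul_assoc] at h
    exact eq_sub_of_add_eq' h
  -- Schur row identity: Sc * d1 = W
  have hScd1 : Sc * d1 = W := by
    rw [hd2eq] at hrow1
    rw [hW, ← hrow1, hSc]
    simp only [Matrix.sub_mul, Matrix.mul_sub, Matrix.mul_add, Matrix.mul_assoc]
    abel
  -- symmetry of Sc
  have hR11sym : R11'ᵀ = R11' := by
    rw [hR11', GameData.R11P, Matrix.transpose_add, Matrix.transpose_sum, g.hR11.eq]
    congr 1
    refine Finset.sum_congr rfl fun l _ => ?_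
    rw [Matrix.transpose_mul, Matrix.transpose_mul, Matrix.transpose_transpose,
      hXsym, Matrix.mul_assoc]
  have hR21sym : R21'ᵀ = R12' := by
    rw [hR21', hR12', GameData.R21P, GameData.R12P, Matrix.transpose_add,
      Matrix.transpose_sum, Matrix.transpose_transpose]
    congr 1
    refine Finset.sum_congr rfl fun l _ => ?_
    rw [Matrix.transpose_mul, Matrix.transpose_mul, Matrix.transpose_transpose,
      hXsym, Matrix.mul_assoc]
  have hR22sym : R22'ᵀ = R22' := by
    rw [hR22', GameData.R22P, Matrix.transpose_add, Matrix.transpose_sum, g.hR22.eq]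
    congr 1
    refine Finset.sum_congr rfl fun l _ => ?_
    rw [Matrix.transpose_mul, Matrix.transpose_mul, Matrix.transpose_transpose,
      hXsym, Matrix.mul_assoc]
  have hR12sym : R12'ᵀ = R21' := by
    rw [← hR21sym, Matrix.transpose_transpose]
  have hScsym : Scᵀ = Sc := by
    rw [hSc, Matrix.transpose_sub, hR11sym, Matrix.transpose_mul,
      Matrix.transpose_mul, hR21sym, Matrix.transpose_nonsing_inv, hR22sym,
      hR12sym, Matrix.mul_assoc]
  -- the central quadratic identity
  have hquad : d1ᵀ * (Sc * d1) = Wᵀ * Sc⁻¹ * W := by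
    rw [← hScd1, Matrix.transpose_mul, hScsym]
    rw [Matrix.mul_assoc (d1ᵀ * Sc), ← Matrix.mul_assoc Sc⁻¹,
      Matrix.nonsing_inv_mul _ hSchur, Matrix.one_mul, Matrix.mul_assoc]
  -- assemble
  rw [hDelta, hRPZblocks, Matrix.transpose_fromRows,
    Matrix.fromCols_mul_fromBlocks, Matrix.fromCols_mul_fromBlocks,
    Matrix.fromCols_mul_fromRows, Matrix.fromCols_mul_fromRows,
    ← sub_eq_iff_eq_add]
  calc (d1ᵀ * R11' + D2'ᵀ * R21') * d1 + (d1ᵀ * R12' + D2'ᵀ * R22') * D2'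
      - ((d1ᵀ * (R12' * R22'⁻¹ * R21') + D2'ᵀ * R21') * d1
        + (d1ᵀ * R12' + D2'ᵀ * R22') * D2')
      = d1ᵀ * (Sc * d1) := by
        simp only [hSc, Matrix.sub_mul, Matrix.mul_sub, Matrix.add_mul,
          Matrix.mul_assoc]
        abel
    _ = Wᵀ * Sc⁻¹ * W := hquad
end
end

section
/- Let A, C_1, …, C_r ∈ ℝ^{n×n} and E_0, E_1, …, E_r ∈ ℝ^{q×n}, and suppose the system [E_0, …, E_r; A, C_1, …, C_r] is stochastically detectable. Then the following are equivalent: (a) the tuple (A, C_1, …, C_r) is mean-square stable; (b) there exists a real symmetric positive semidefinite n×n matrix P satisfying P A + A^T P + Σ_{l=1}^r C_l^T P C_l + Σ_{l=0}^r E_l^T E_l = 0. -/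
open Matrix

noncomputable section

section Aux

attribute [local instance] Matrix.normedAddCommGroup Matrix.normedSpace

variable {n : ℕ}

/-- quadratic form -/
def qf (W : Matrix (Fin n) (Fin n) ℝ) (x : Fin n → ℝ) : ℝ := x ⬝ᵥ (W *ᵥ x)

lemma psd_iff (W : Matrix (Fin n) (Fin n) ℝ) :
    W.PosSemidef ↔ W.IsHermitian ∧ ∀ x, 0 ≤ qf W x := by
  rw [Matrix.posSemidef_iff_dotProduct_mulVec]; unfold qf
  simp

lemma pd_iff (W : Matrix (Fin n) (Fin n) ℝ) :
    W.PosDef ↔ W.IsHermitian ∧ ∀ x, x ≠ 0 → 0 < qf W x := by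
  rw [Matrix.posDef_iff_dotProduct_mulVec]; unfold qf
  simp

lemma qf_add (W V : Matrix (Fin n) (Fin n) ℝ) (x : Fin n → ℝ) :
    qf (W + V) x = qf W x + qf V x := by
  simp [qf, add_mulVec, dotProduct_add]

lemma qf_sub (W V : Matrix (Fin n) (Fin n) ℝ) (x : Fin n → ℝ) :
    qf (W - V) x = qf W x - qf V x := by
  simp [qf, sub_mulVec, dotProduct_sub]

lemma qf_neg (W : Matrix (Fin n) (Fin n) ℝ) (x : Fin n → ℝ) :
    qf (-W) x = - qf W x := by
  simp [qf, neg_mulVec, dotProduct_neg]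

lemma qf_smul (c : ℝ) (W : Matrix (Fin n) (Fin n) ℝ) (x : Fin n → ℝ) :
    qf (c • W) x = c * qf W x := by
  simp [qf, smul_mulVec, dotProduct_smul]

lemma qf_zero (x : Fin n → ℝ) : qf (0 : Matrix (Fin n) (Fin n) ℝ) x = 0 := by simp [qf]

lemma qf_sum {ι : Type*} (s : Finset ι) (W : ι → Matrix (Fin n) (Fin n) ℝ) (x : Fin n → ℝ) :
    qf (∑ l ∈ s, W l) x = ∑ l ∈ s, qf (W l) x := by
  classical
  induction s using Finset.induction_on with
  | empty => simp [qf_zero]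
  | insert _ _ h ih => rw [Finset.sum_insert h, Finset.sum_insert h, qf_add, ih]

lemma qf_conj {m : ℕ} (W : Matrix (Fin n) (Fin n) ℝ) (M : Matrix (Fin n) (Fin m) ℝ)
    (x : Fin m → ℝ) : qf (Mᵀ * W * M) x = qf W (M *ᵥ x) := by
  show x ⬝ᵥ ((Mᵀ * W * M) *ᵥ x) = _
  rw [← mulVec_mulVec, ← mulVec_mulVec, Matrix.dotProduct_mulVec, vecMul_transpose]
  rfl

lemma qf_smul_vec (c : ℝ) (W : Matrix (Fin n) (Fin n) ℝ) (x : Fin n → ℝ) :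
    qf W (c • x) = c ^ 2 * qf W x := by
  simp [qf, mulVec_smul, dotProduct_smul, smul_dotProduct]
  ring

lemma qf_one (x : Fin n → ℝ) : qf (1 : Matrix (Fin n) (Fin n) ℝ) x = x ⬝ᵥ x := by
  simp [qf]

lemma dot_self_nonneg (x : Fin n → ℝ) : 0 ≤ x ⬝ᵥ x := by
  simpa using dotProduct_star_self_nonneg x

lemma dot_self_pos {x : Fin n → ℝ} (hx : x ≠ 0) : 0 < x ⬝ᵥ x := by
  have := Matrix.dotProduct_star_self_pos_iff (v := x)
  simp only [star_trivial] at this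
  exact this.mpr hx

/-- upper bound for a quadratic form -/
lemma qf_upper (W : Matrix (Fin n) (Fin n) ℝ) :
    ∃ c > 0, ∀ x, qf W x ≤ c * (x ⬝ᵥ x) := by
  refine ⟨(∑ i, ∑ j, |W i j|) + 1, by positivity, fun x => ?_⟩
  have hxx : ∀ i j, |x i| * |x j| ≤ x ⬝ᵥ x := by
    intro i j
    have h1 : x i ^ 2 + x j ^ 2 ≤ 2 * (x ⬝ᵥ x) := by
      have e1 : x i ^ 2 ≤ x ⬝ᵥ x := by
        have : x i ^ 2 ≤ ∑ k, x k * x k := by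
          have := Finset.single_le_sum (f := fun k => x k * x k)
            (fun k _ => mul_self_nonneg (x k)) (Finset.mem_univ i)
          simpa [sq] using this
        simpa [dotProduct] using this
      have e2 : x j ^ 2 ≤ x ⬝ᵥ x := by
        have : x j ^ 2 ≤ ∑ k, x k * x k := by
          have := Finset.single_le_sum (f := fun k => x k * x k)
            (fun k _ => mul_self_nonneg (x k)) (Finset.mem_univ j)
          simpa [sq] using this
        simpa [dotProduct] using this
      linarith
    nlinarith [abs_nonneg (x i), abs_nonneg (x j), sq_abs (x i), sq_abs (x j),
      sq_nonneg (|x i| - |x j|)]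
  have h2 : qf W x ≤ ∑ i, ∑ j, |W i j| * (x ⬝ᵥ x) := by
    have : qf W x = ∑ i, ∑ j, x i * W i j * x j := by
      simp only [qf, dotProduct, mulVec, Finset.mul_sum]
      exact Finset.sum_congr rfl fun i _ => Finset.sum_congr rfl fun j _ => by ring
    rw [this]
    refine Finset.sum_le_sum fun i _ => Finset.sum_le_sum fun j _ => ?_
    calc x i * W i j * x j ≤ |x i * W i j * x j| := le_abs_self _
    _ = |W i j| * (|x i| * |x j|) := by rw [abs_mul, abs_mul]; ring
    _ ≤ |W i j| * (x ⬝ᵥ x) := by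
        exact mul_le_mul_of_nonneg_left (hxx i j) (abs_nonneg _)
  calc qf W x ≤ ∑ i, ∑ j, |W i j| * (x ⬝ᵥ x) := h2
  _ = (∑ i, ∑ j, |W i j|) * (x ⬝ᵥ x) := by rw [Finset.sum_mul]; simp [Finset.sum_mul]
  _ ≤ ((∑ i, ∑ j, |W i j|) + 1) * (x ⬝ᵥ x) := by
      nlinarith [dot_self_nonneg x]

lemma continuous_qf (W : Matrix (Fin n) (Fin n) ℝ) : Continuous fun x : Fin n → ℝ => qf W x := by
  have : ∀ x : Fin n → ℝ, qf W x = ∑ i, x i * ∑ j, W i j * x j := by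
    intro x; simp [qf, dotProduct, mulVec]
  simp only [this]
  exact continuous_finset_sum _ fun i _ =>
    (continuous_apply i).mul (continuous_finset_sum _ fun j _ =>
      (continuous_const.mul (continuous_apply j)))

lemma continuous_dot_self : Continuous fun x : Fin n → ℝ => x ⬝ᵥ x := by
  have : (fun x : Fin n → ℝ => x ⬝ᵥ x) = fun x => ∑ i, x i * x i := by
    funext x; simp [dotProduct]
  rw [this]
  exact continuous_finset_sum _ fun i _ => (continuous_apply i).mul (continuous_apply i)

lemma qf_lower {W : Matrix (Fin n) (Fin n) ℝ} (hW : W.PosDef) :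
    ∃ δ > 0, ∀ x, δ * (x ⬝ᵥ x) ≤ qf W x := by
  rcases Nat.eq_zero_or_pos n with h0 | hn
  · refine ⟨1, one_pos, fun x => ?_⟩
    subst h0
    have : x = 0 := funext fun i => absurd i.2 (by omega)
    simp [this, qf]
  · set K : Set (Fin n → ℝ) := {x | x ⬝ᵥ x = 1} with hK
    have hcpt : IsCompact K := by
      have hclosed : IsClosed K := isClosed_eq continuous_dot_self continuous_const
      have hbdd : Bornology.IsBounded K := by
        refine (Metric.isBounded_closedBall (x := (0 : Fin n → ℝ)) (r := 1)).subset ?_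
        intro x hx
        simp only [Metric.mem_closedBall, dist_zero_right]
        refine pi_norm_le_iff_of_nonneg zero_le_one |>.mpr fun i => ?_
        have h1 : x i * x i ≤ 1 := by
          have := Finset.single_le_sum (f := fun k => x k * x k)
            (fun k _ => mul_self_nonneg (x k)) (Finset.mem_univ i)
          simp only [hK, Set.mem_setOf_eq, dotProduct] at hx
          simpa [hx] using this
        have : |x i| ≤ 1 := abs_le_one_iff_mul_self_le_one.mpr h1
        simpa using this
      exact Metric.isCompact_of_isClosed_isBounded hclosed hbdd
    have hne : K.Nonempty := by
      refine ⟨Pi.single ⟨0, hn⟩ 1, ?_⟩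
      simp [hK, dotProduct, Pi.single_apply]
    obtain ⟨z, hzK, hz⟩ := hcpt.exists_isMinOn hne (continuous_qf W).continuousOn
    have hz1 : z ⬝ᵥ z = 1 := hzK
    have hzne : z ≠ 0 := by
      intro h
      rw [h] at hz1
      simp at hz1
    have hδ : 0 < qf W z := ((pd_iff W).mp hW).2 z hzne
    refine ⟨qf W z, hδ, fun x => ?_⟩
    rcases eq_or_ne x 0 with rfl | hx
    · simp [qf]
    · have hxx : 0 < x ⬝ᵥ x := dot_self_pos hx
      set s : ℝ := Real.sqrt (x ⬝ᵥ x) with hs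
      have hspos : 0 < s := Real.sqrt_pos.mpr hxx
      have hs2 : s ^ 2 = x ⬝ᵥ x := Real.sq_sqrt hxx.le
      have hyK : (s⁻¹ • x) ∈ K := by
        simp only [hK, Set.mem_setOf_eq, smul_dotProduct, dotProduct_smul, smul_eq_mul]
        field_simp
        nlinarith [hs2]
      have hmin : qf W z ≤ qf W (s⁻¹ • x) := hz hyK
      have hq : qf W (s⁻¹ • x) = (s⁻¹) ^ 2 * qf W x := qf_smul_vec _ _ _
      rw [hq] at hmin
      have h2 : qf W z * s ^ 2 ≤ qf W x := by
        rw [inv_pow] at hmin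
        have := mul_le_mul_of_nonneg_right hmin (le_of_lt (pow_pos hspos 2))
        calc qf W z * s ^ 2 ≤ (s ^ 2)⁻¹ * qf W x * s ^ 2 := this
        _ = qf W x := by field_simp
      calc qf W z * (x ⬝ᵥ x) = qf W z * s ^ 2 := by rw [hs2]
      _ ≤ qf W x := h2

lemma qf_single (P : Matrix (Fin n) (Fin n) ℝ) (i : Fin n) :
    qf P (Pi.single i 1) = P i i := by
  simp [qf, dotProduct, mulVec, Pi.single_apply]

lemma psd_qf {P : Matrix (Fin n) (Fin n) ℝ} (hP : P.PosSemidef) (x : Fin n → ℝ) :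
    0 ≤ qf P x := by exact ((psd_iff P).mp hP).2 x

lemma psd_diag_nonneg {P : Matrix (Fin n) (Fin n) ℝ} (hP : P.PosSemidef) (i : Fin n) :
    0 ≤ P i i := by
  have := psd_qf hP (Pi.single i 1)
  rwa [qf_single] at this

lemma psd_trace_nonneg {P : Matrix (Fin n) (Fin n) ℝ} (hP : P.PosSemidef) :
    0 ≤ P.trace :=
  Finset.sum_nonneg fun i _ => psd_diag_nonneg hP i

lemma real_herm_symm {P : Matrix (Fin n) (Fin n) ℝ} (hP : P.IsHermitian) (i j : Fin n) :
    P j i = P i j := by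
  have := congrFun (congrFun hP j) i
  simp only [Matrix.conjTranspose_apply, star_trivial] at this
  exact this.symm

lemma psd_entry_le_trace {P : Matrix (Fin n) (Fin n) ℝ} (hP : P.PosSemidef) (i j : Fin n) :
    |P i j| ≤ P.trace := by
  rcases eq_or_ne i j with rfl | hij
  · rw [abs_of_nonneg (psd_diag_nonneg hP i)]
    exact Finset.single_le_sum (f := fun k => P k k)
      (fun k _ => psd_diag_nonneg hP k) (Finset.mem_univ i)
  · have hsum : P i i + P j j ≤ P.trace := by
      have : ∑ k ∈ ({i, j} : Finset (Fin n)), P k k ≤ P.trace := by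
        apply Finset.sum_le_sum_of_subset_of_nonneg (Finset.subset_univ _)
        intro k _ _; exact psd_diag_nonneg hP k
      rwa [Finset.sum_insert (by simpa using hij), Finset.sum_singleton] at this
    have hq : ∀ t : ℝ, 0 ≤ qf P (Pi.single i (1:ℝ) + Pi.single j t) := fun t => psd_qf hP _
    have hexp : ∀ t : ℝ, qf P (Pi.single i (1:ℝ) + Pi.single j t)
        = P i i + t * (P i j + P j i) + t ^ 2 * P j j := by
      intro t
      simp only [qf, dotProduct, mulVec, Pi.add_apply, Pi.single_apply, add_mul, mul_add,
        Finset.sum_add_distrib, ite_mul, mul_ite, one_mul, mul_one, zero_mul, mul_zero,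
        Finset.sum_ite_eq, Finset.sum_ite_eq', Finset.mem_univ, if_true]
      ring
    have hsymm := real_herm_symm hP.1 i j
    have h1 := hq 1
    have h2 := hq (-1)
    rw [hexp 1] at h1
    rw [hexp (-1)] at h2
    rw [hsymm] at h1 h2
    rw [abs_le]
    constructor <;> nlinarith

lemma psd_trace_mono {P Z : Matrix (Fin n) (Fin n) ℝ} (hZP : (Z - P).PosSemidef) :
    P.trace ≤ Z.trace := by
  have := psd_trace_nonneg hZP
  rw [Matrix.trace_sub] at this
  linarith

lemma psd_norm_le_trace {P : Matrix (Fin n) (Fin n) ℝ} (hP : P.PosSemidef) :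
    ‖P‖ ≤ P.trace := by
  refine (Matrix.norm_le_iff (psd_trace_nonneg hP)).mpr fun i j => ?_
  simpa [Real.norm_eq_abs] using psd_entry_le_trace hP i j

lemma psd_norm_le {P Z : Matrix (Fin n) (Fin n) ℝ} (hP : P.PosSemidef)
    (hZP : (Z - P).PosSemidef) : ‖P‖ ≤ Z.trace :=
  (psd_norm_le_trace hP).trans (psd_trace_mono hZP)

lemma qf_gram {m : ℕ} (M : Matrix (Fin m) (Fin n) ℝ) (x : Fin n → ℝ) :
    qf (Mᵀ * M) x = (M *ᵥ x) ⬝ᵥ (M *ᵥ x) := by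
  have : Mᵀ * M = Mᵀ * (1 : Matrix (Fin m) (Fin m) ℝ) * M := by rw [Matrix.mul_one]
  rw [this, qf_conj, qf_one]

lemma qf_mul_left (Y B : Matrix (Fin n) (Fin n) ℝ) (x : Fin n → ℝ) :
    qf (Y * B) x = x ⬝ᵥ (Y *ᵥ (B *ᵥ x)) := by
  rw [qf, ← mulVec_mulVec]

lemma qf_mul_right (B Y : Matrix (Fin n) (Fin n) ℝ) (x : Fin n → ℝ) :
    qf (Bᵀ * Y) x = (B *ᵥ x) ⬝ᵥ (Y *ᵥ x) := by
  rw [qf, ← mulVec_mulVec, Matrix.dotProduct_mulVec, vecMul_transpose]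

lemma herm_transpose_eq {X : Matrix (Fin n) (Fin n) ℝ} (hX : X.IsHermitian) : Xᵀ = X := by
  have := hX.eq
  rwa [conjTranspose_eq_transpose_of_trivial] at this

lemma dot_mulVec_symm {Y : Matrix (Fin n) (Fin n) ℝ} (hY : Yᵀ = Y) (u v : Fin n → ℝ) :
    u ⬝ᵥ (Y *ᵥ v) = v ⬝ᵥ (Y *ᵥ u) := by
  rw [Matrix.dotProduct_mulVec]
  conv_lhs => rw [← hY]
  rw [vecMul_transpose, dotProduct_comm]

lemma qf_vec_add {Y : Matrix (Fin n) (Fin n) ℝ} (hY : Yᵀ = Y) (u v : Fin n → ℝ) :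
    qf Y (u + v) = qf Y u + 2 * (u ⬝ᵥ (Y *ᵥ v)) + qf Y v := by
  simp only [qf, mulVec_add, dotProduct_add, add_dotProduct]
  rw [dot_mulVec_symm hY v u]
  ring

lemma b_theta {q : ℕ} {Y : Matrix (Fin n) (Fin n) ℝ} (Θ : Matrix (Fin n) (Fin q) ℝ)
    (u : Fin n → ℝ) (v : Fin q → ℝ) :
    u ⬝ᵥ (Y *ᵥ (Θ *ᵥ v)) = ((Θᵀ * Yᵀ) *ᵥ u) ⬝ᵥ v := by
  rw [mulVec_mulVec, Matrix.dotProduct_mulVec]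
  congr 1
  have h2 : Y * Θ = ((Y * Θ)ᵀ)ᵀ := by rw [transpose_transpose]
  rw [h2, vecMul_transpose, transpose_mul]

lemma cross_lower (w v : Fin n → ℝ) {t : ℝ} (ht : 0 < t) :
    -(t * (v ⬝ᵥ v) + t⁻¹ * (w ⬝ᵥ w)) ≤ 2 * (w ⬝ᵥ v) := by
  have h := dot_self_nonneg (w + t • v)
  have hexp : (w + t • v) ⬝ᵥ (w + t • v)
      = (w ⬝ᵥ w) + 2 * t * (w ⬝ᵥ v) + t ^ 2 * (v ⬝ᵥ v) := by
    simp only [dotProduct_add, add_dotProduct, dotProduct_smul, smul_dotProduct, smul_eq_mul,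
      dotProduct_comm v w]
    ring
  rw [hexp] at h
  have hkey : 2 * (w ⬝ᵥ v) + (t * (v ⬝ᵥ v) + t⁻¹ * (w ⬝ᵥ w))
      = t⁻¹ * ((w ⬝ᵥ w) + 2 * t * (w ⬝ᵥ v) + t ^ 2 * (v ⬝ᵥ v)) := by
    field_simp
    ring
  linarith [mul_nonneg (inv_nonneg.mpr ht.le) h, hkey]

lemma transpose_lyap {r : ℕ} {X A : Matrix (Fin n) (Fin n) ℝ} {C : Fin r → Matrix (Fin n) (Fin n) ℝ}
    (hX : Xᵀ = X) :
    (X * A + Aᵀ * X + ∑ l, (C l)ᵀ * X * C l)ᵀ = X * A + Aᵀ * X + ∑ l, (C l)ᵀ * X * C l := by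
  have hterm : ∀ l : Fin r, ((C l)ᵀ * X * C l)ᵀ = (C l)ᵀ * X * C l := by
    intro l
    rw [transpose_mul, transpose_mul, transpose_transpose, hX, mul_assoc]
  rw [transpose_add, transpose_add, transpose_mul, transpose_mul, transpose_transpose, hX,
    Matrix.transpose_sum]
  simp only [hterm]
  abel

lemma herm_lyap {r : ℕ} {X A : Matrix (Fin n) (Fin n) ℝ} {C : Fin r → Matrix (Fin n) (Fin n) ℝ}
    (hX : Xᵀ = X) :
    (-(X * A + Aᵀ * X + ∑ l, (C l)ᵀ * X * C l)).IsHermitian := by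
  show _ = _
  rw [conjTranspose_eq_transpose_of_trivial, transpose_neg, transpose_lyap hX]

section PartOne

variable {q r : ℕ}

/-- Direction (b) ⇒ (a). -/
lemma partI (A : Matrix (Fin n) (Fin n) ℝ) (C : Fin r → Matrix (Fin n) (Fin n) ℝ)
    (E0 : Matrix (Fin q) (Fin n) ℝ) (E : Fin r → Matrix (Fin q) (Fin n) ℝ)
    (Θ : Matrix (Fin n) (Fin q) ℝ) (Y : Matrix (Fin n) (Fin n) ℝ) (hY : Y.PosDef)
    (hNpd : (-(Y * (A + Θ * E0) + (A + Θ * E0)ᵀ * Y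
      + ∑ l, (C l + Θ * E l)ᵀ * Y * (C l + Θ * E l))).PosDef)
    (P : Matrix (Fin n) (Fin n) ℝ) (hP : P.PosSemidef)
    (heq : P * A + Aᵀ * P + ∑ l, (C l)ᵀ * P * C l + (E0ᵀ * E0 + ∑ l, (E l)ᵀ * E l) = 0) :
    ∃ X : Matrix (Fin n) (Fin n) ℝ, X.PosDef ∧
      (-(X * A + Aᵀ * X + ∑ l, (C l)ᵀ * X * C l)).PosDef := by
  have Yt : Yᵀ = Y := herm_transpose_eq hY.1
  have Pt : Pᵀ = P := herm_transpose_eq hP.1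
  set Nm : Matrix (Fin n) (Fin n) ℝ := -(Y * (A + Θ * E0) + (A + Θ * E0)ᵀ * Y
      + ∑ l, (C l + Θ * E l)ᵀ * Y * (C l + Θ * E l)) with hNm
  set G : Matrix (Fin q) (Fin n) ℝ := Θᵀ * Y with hG
  set Rm : Matrix (Fin n) (Fin n) ℝ := Gᵀ * G + ∑ l, (C l)ᵀ * (Gᵀ * G) * C l with hRm
  obtain ⟨δN, hδN, hNlow⟩ := qf_lower hNpd
  obtain ⟨ρ, hρ, hRup⟩ := qf_upper Rm
  set ε : ℝ := δN / (2 * ρ) with hε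
  have hεpos : 0 < ε := by positivity
  set X : Matrix (Fin n) (Fin n) ℝ := P + ε • Y with hX
  have hXt : Xᵀ = X := by rw [hX, transpose_add, transpose_smul, Pt, Yt]
  have hXherm : X.IsHermitian := by
    show _ = _
    rw [conjTranspose_eq_transpose_of_trivial, hXt]
  have hbtheta : ∀ (u : Fin n → ℝ) (v : Fin q → ℝ),
      u ⬝ᵥ (Y *ᵥ (Θ *ᵥ v)) = (G *ᵥ u) ⬝ᵥ v := by
    intro u v
    rw [b_theta Θ u v, Yt]
  refine ⟨X, ?_, ?_⟩
  · refine (pd_iff X).mpr ⟨hXherm, fun x hx => ?_⟩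
    have h1 : qf X x = qf P x + ε * qf Y x := by rw [hX, qf_add, qf_smul]
    have h2 : 0 < qf Y x := ((pd_iff Y).mp hY).2 x (by simpa using hx)
    have h3 : 0 ≤ qf P x := psd_qf hP x
    rw [h1]; nlinarith
  · refine (pd_iff _).mpr ⟨herm_lyap hXt, fun x hx => ?_⟩
    have hx' : (x : Fin n → ℝ) ≠ 0 := by simpa using hx
    have hd : 0 < x ⬝ᵥ x := dot_self_pos hx'
    -- scalar abbreviations
    set ba : ℝ := x ⬝ᵥ (Y *ᵥ (A *ᵥ x)) with hba
    set b0 : ℝ := (G *ᵥ x) ⬝ᵥ (E0 *ᵥ x) with hb0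
    set Sc : ℝ := ∑ l, qf Y (C l *ᵥ x) with hSc
    set Sb : ℝ := ∑ l, 2 * ((G *ᵥ (C l *ᵥ x)) ⬝ᵥ (E l *ᵥ x)) with hSb
    set Sθ : ℝ := ∑ l, qf Y (Θ *ᵥ (E l *ᵥ x)) with hSθ
    set S1 : ℝ := (E0 *ᵥ x) ⬝ᵥ (E0 *ᵥ x) with hS1
    set S2 : ℝ := ∑ l, (E l *ᵥ x) ⬝ᵥ (E l *ᵥ x) with hS2
    set w0 : ℝ := (G *ᵥ x) ⬝ᵥ (G *ᵥ x) with hw0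
    set W2 : ℝ := ∑ l, (G *ᵥ (C l *ᵥ x)) ⬝ᵥ (G *ᵥ (C l *ᵥ x)) with hW2
    -- (k2) the Lyapunov equation in quadratic form
    have k2 : qf (P * A + Aᵀ * P + ∑ l, (C l)ᵀ * P * C l) x = -(S1 + S2) := by
      have h0 : qf ((P * A + Aᵀ * P + ∑ l, (C l)ᵀ * P * C l)
          + (E0ᵀ * E0 + ∑ l, (E l)ᵀ * E l)) x = 0 := by
        rw [heq, qf_zero]
      rw [qf_add, qf_add (E0ᵀ * E0) (∑ l, (E l)ᵀ * E l) x, qf_gram] at h0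
      have h0' : qf (∑ l, (E l)ᵀ * E l) x = S2 := by
        rw [qf_sum, hS2]
        exact Finset.sum_congr rfl fun l _ => qf_gram _ _
      rw [h0', ← hS1] at h0
      linarith
    -- (k3) the Y-part of the target
    have k3 : qf (Y * A + Aᵀ * Y + ∑ l, (C l)ᵀ * Y * C l) x = 2 * ba + Sc := by
      rw [qf_add, qf_add, qf_mul_left, qf_mul_right]
      have h1 : qf (∑ l, (C l)ᵀ * Y * C l) x = Sc := by
        rw [qf_sum, hSc]
        exact Finset.sum_congr rfl fun l _ => qf_conj _ _ _
      rw [h1, dot_mulVec_symm Yt (A *ᵥ x) x, ← hba]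
      ring
    -- (k4) the closed-loop Lyapunov form
    have k4 : qf Nm x = -(2 * ba + 2 * b0 + Sc + Sb + Sθ) := by
      rw [hNm, qf_neg, qf_add, qf_add, qf_mul_left, qf_mul_right]
      have h1 : qf (∑ l, (C l + Θ * E l)ᵀ * Y * (C l + Θ * E l)) x = Sc + Sb + Sθ := by
        rw [qf_sum]
        have h2 : ∀ l : Fin r, qf ((C l + Θ * E l)ᵀ * Y * (C l + Θ * E l)) x
            = qf Y (C l *ᵥ x) + 2 * ((G *ᵥ (C l *ᵥ x)) ⬝ᵥ (E l *ᵥ x))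
              + qf Y (Θ *ᵥ (E l *ᵥ x)) := by
          intro l
          rw [qf_conj]
          have hg : (C l + Θ * E l) *ᵥ x = C l *ᵥ x + Θ *ᵥ (E l *ᵥ x) := by
            rw [add_mulVec, ← mulVec_mulVec]
          rw [hg, qf_vec_add Yt, hbtheta]
        rw [Finset.sum_congr rfl fun l _ => h2 l, Finset.sum_add_distrib,
          Finset.sum_add_distrib, hSc, hSb, hSθ]
      have h3 : x ⬝ᵥ (Y *ᵥ ((A + Θ * E0) *ᵥ x)) = ba + b0 := by
        have hf : (A + Θ * E0) *ᵥ x = A *ᵥ x + Θ *ᵥ (E0 *ᵥ x) := by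
          rw [add_mulVec, ← mulVec_mulVec]
        rw [hf, mulVec_add, dotProduct_add, hbtheta x (E0 *ᵥ x), ← hba, ← hb0]
      rw [h1, dot_mulVec_symm Yt ((A + Θ * E0) *ᵥ x) x, h3]
      ring
    -- (k1) expansion of the target quadratic form
    have kmat : X * A + Aᵀ * X + ∑ l, (C l)ᵀ * X * C l
        = (P * A + Aᵀ * P + ∑ l, (C l)ᵀ * P * C l)
          + ε • (Y * A + Aᵀ * Y + ∑ l, (C l)ᵀ * Y * C l) := by
      rw [hX]
      rw [add_mul, mul_add, smul_mul_assoc, mul_smul_comm, smul_add]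
      have hsum : ∀ l : Fin r, (C l)ᵀ * (P + ε • Y) * C l
          = (C l)ᵀ * P * C l + ε • ((C l)ᵀ * Y * C l) := by
        intro l
        rw [mul_add, add_mul, mul_smul_comm, smul_mul_assoc]
      rw [Finset.sum_congr rfl fun l _ => hsum l, Finset.sum_add_distrib, ← Finset.smul_sum]
      rw [smul_add]
      abel
    have k1 : qf (-(X * A + Aᵀ * X + ∑ l, (C l)ᵀ * X * C l)) x
        = (S1 + S2) - ε * (2 * ba + Sc) := by
      rw [qf_neg, kmat, qf_add, qf_smul, k2, k3]
      ring
    -- lower bounds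
    have hNge : δN * (x ⬝ᵥ x) ≤ qf Nm x := hNlow x
    have h2b0 : -(ε⁻¹ * S1 + ε * w0) ≤ 2 * b0 := by
      have h := cross_lower (G *ᵥ x) (E0 *ᵥ x) (t := ε⁻¹) (by positivity)
      rwa [inv_inv, ← hb0, ← hw0, ← hS1] at h
    have hSbge : -(ε⁻¹ * S2 + ε * W2) ≤ Sb := by
      have hterm : ∀ l ∈ Finset.univ (α := Fin r),
          -(ε⁻¹ * ((E l *ᵥ x) ⬝ᵥ (E l *ᵥ x)) + ε * ((G *ᵥ (C l *ᵥ x)) ⬝ᵥ (G *ᵥ (C l *ᵥ x))))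
          ≤ 2 * ((G *ᵥ (C l *ᵥ x)) ⬝ᵥ (E l *ᵥ x)) := by
        intro l _
        have h := cross_lower (G *ᵥ (C l *ᵥ x)) (E l *ᵥ x) (t := ε⁻¹) (by positivity)
        rwa [inv_inv] at h
      have hsum := Finset.sum_le_sum hterm
      rw [← hSb] at hsum
      refine le_trans (le_of_eq ?_) hsum
      rw [Finset.sum_neg_distrib]
      congr 1
      rw [Finset.sum_add_distrib, ← Finset.mul_sum, ← Finset.mul_sum, ← hS2, ← hW2]
    have hSθge : 0 ≤ Sθ := by
      rw [hSθ]
      exact Finset.sum_nonneg fun l _ => psd_qf hY.posSemidef _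
    have hWle : w0 + W2 ≤ ρ * (x ⬝ᵥ x) := by
      have h1 : qf Rm x = w0 + W2 := by
        rw [hRm, qf_add, qf_gram, ← hw0]
        have h2 : qf (∑ l, (C l)ᵀ * (Gᵀ * G) * C l) x = W2 := by
          rw [qf_sum, hW2]
          refine Finset.sum_congr rfl fun l _ => ?_
          rw [qf_conj, qf_gram]
        rw [h2]
      rw [← h1]
      exact hRup x
    -- combine, using k4 to eliminate (2*ba + Sc)
    have hcore : 2 * ba + Sc = -(qf Nm x) - 2 * b0 - Sb - Sθ := by
      rw [k4]; ring
    rw [k1, hcore]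
    -- now conclude by arithmetic
    have hw0' : 0 ≤ w0 := by rw [hw0]; exact dot_self_nonneg _
    have hW2' : 0 ≤ W2 := by rw [hW2]; exact Finset.sum_nonneg fun l _ => dot_self_nonneg _
    have hfact : ε * ε⁻¹ = 1 := mul_inv_cancel₀ hεpos.ne'
    have hfin : ε * ρ ≤ δN / 2 := by
      rw [hε, div_mul_eq_mul_div, mul_comm, div_le_div_iff₀ (by positivity) (by norm_num)]
      nlinarith
    have hεε : 0 ≤ ε * ε := mul_nonneg hεpos.le hεpos.le
    have P1 := mul_le_mul_of_nonneg_left hNge hεpos.le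
    have P2 := mul_le_mul_of_nonneg_left h2b0 hεpos.le
    have P2' : -S1 - ε * ε * w0 ≤ ε * (2 * b0) := by
      refine le_trans (le_of_eq ?_) P2
      have hne : ε ≠ 0 := hεpos.ne'
      field_simp
      ring
    have P3 := mul_le_mul_of_nonneg_left hSbge hεpos.le
    have P3' : -S2 - ε * ε * W2 ≤ ε * Sb := by
      refine le_trans (le_of_eq ?_) P3
      have hne : ε ≠ 0 := hεpos.ne'
      field_simp
      ring
    have P4 := mul_le_mul_of_nonneg_left hWle hεε
    have P5 := mul_le_mul_of_nonneg_left hfin hεpos.le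
    have P6 := mul_le_mul_of_nonneg_right P5 hd.le
    have P7 : 0 < ε * δN * (x ⬝ᵥ x) := mul_pos (mul_pos hεpos hδN) hd
    have P8 : 0 ≤ ε * Sθ := mul_nonneg hεpos.le hSθge
    clear_value Nm G Rm ε X ba b0 Sc Sb Sθ S1 S2 w0 W2
    linarith [P1, P2', P3', P4, P6, P7, P8]

end PartOne

section PartTwoInfra

lemma herm_of_transpose {W : Matrix (Fin n) (Fin n) ℝ} (h : Wᵀ = W) : W.IsHermitian := by
  show _ = _
  rw [conjTranspose_eq_transpose_of_trivial, h]

lemma psd_of_qf {W : Matrix (Fin n) (Fin n) ℝ} (ht : Wᵀ = W) (h : ∀ x, 0 ≤ qf W x) :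
    W.PosSemidef :=
  (psd_iff W).mpr ⟨herm_of_transpose ht, h⟩

lemma psd_smul {W : Matrix (Fin n) (Fin n) ℝ} (hW : W.PosSemidef) {c : ℝ} (hc : 0 ≤ c) :
    (c • W).PosSemidef := by
  refine psd_of_qf ?_ fun x => ?_
  · rw [transpose_smul, herm_transpose_eq hW.1]
  · rw [qf_smul]
    exact mul_nonneg hc (psd_qf hW x)

lemma psd_sum {ι : Type*} (s : Finset ι) (W : ι → Matrix (Fin n) (Fin n) ℝ)
    (h : ∀ l ∈ s, (W l).PosSemidef) : (∑ l ∈ s, W l).PosSemidef := by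
  refine psd_of_qf ?_ fun x => ?_
  · rw [Matrix.transpose_sum]
    exact Finset.sum_congr rfl fun l hl => herm_transpose_eq (h l hl).1
  · rw [qf_sum]
    exact Finset.sum_nonneg fun l hl => psd_qf (h l hl) x

lemma psd_conj {m : ℕ} {W : Matrix (Fin n) (Fin n) ℝ} (hW : W.PosSemidef)
    (M : Matrix (Fin n) (Fin m) ℝ) : (Mᵀ * W * M).PosSemidef := by
  have h := hW.conjTranspose_mul_mul_same M
  rwa [conjTranspose_eq_transpose_of_trivial] at h

lemma psd_gram {m : ℕ} (M : Matrix (Fin m) (Fin n) ℝ) : (Mᵀ * M).PosSemidef := by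
  have h := Matrix.posSemidef_conjTranspose_mul_self M
  rwa [conjTranspose_eq_transpose_of_trivial] at h

lemma transpose_conj {W M : Matrix (Fin n) (Fin n) ℝ} (hW : Wᵀ = W) :
    (Mᵀ * W * M)ᵀ = Mᵀ * W * M := by
  rw [transpose_mul, transpose_mul, transpose_transpose, hW, mul_assoc]

/-- the sandwich `P ↦ M * P * N` as a linear map -/
def sandwichL (M N : Matrix (Fin n) (Fin n) ℝ) :
    Matrix (Fin n) (Fin n) ℝ →ₗ[ℝ] Matrix (Fin n) (Fin n) ℝ where
  toFun P := M * P * N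
  map_add' P Q := by rw [mul_add, add_mul]
  map_smul' c P := by simp only [RingHom.id_apply]; rw [mul_smul_comm, smul_mul_assoc]

@[simp] lemma sandwichL_apply (M N P : Matrix (Fin n) (Fin n) ℝ) :
    sandwichL M N P = M * P * N := rfl

/-- the Lyapunov operator as a linear map -/
def lyapL {r : ℕ} (A : Matrix (Fin n) (Fin n) ℝ) (C : Fin r → Matrix (Fin n) (Fin n) ℝ) :
    Matrix (Fin n) (Fin n) ℝ →ₗ[ℝ] Matrix (Fin n) (Fin n) ℝ :=
  sandwichL 1 A + sandwichL Aᵀ 1 + ∑ l, sandwichL ((C l)ᵀ) (C l)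

lemma lyapL_apply {r : ℕ} (A : Matrix (Fin n) (Fin n) ℝ) (C : Fin r → Matrix (Fin n) (Fin n) ℝ)
    (P : Matrix (Fin n) (Fin n) ℝ) :
    lyapL A C P = P * A + Aᵀ * P + ∑ l, (C l)ᵀ * P * C l := by
  simp [lyapL, LinearMap.sum_apply]

/-- the iteration map as a linear map -/
def sfL {r : ℕ} (β : ℝ) (A : Matrix (Fin n) (Fin n) ℝ) (C : Fin r → Matrix (Fin n) (Fin n) ℝ) :
    Matrix (Fin n) (Fin n) ℝ →ₗ[ℝ] Matrix (Fin n) (Fin n) ℝ :=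
  sandwichL ((1 + β • A)ᵀ) (1 + β • A) + β • ∑ l, sandwichL ((C l)ᵀ) (C l)

lemma sfL_apply {r : ℕ} (β : ℝ) (A : Matrix (Fin n) (Fin n) ℝ)
    (C : Fin r → Matrix (Fin n) (Fin n) ℝ) (P : Matrix (Fin n) (Fin n) ℝ) :
    sfL β A C P = (1 + β • A)ᵀ * P * (1 + β • A) + β • ∑ l, (C l)ᵀ * P * C l := by
  simp [sfL, LinearMap.sum_apply, Finset.smul_sum]

lemma sfL_expand {r : ℕ} (β : ℝ) (A : Matrix (Fin n) (Fin n) ℝ)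
    (C : Fin r → Matrix (Fin n) (Fin n) ℝ) (P : Matrix (Fin n) (Fin n) ℝ) :
    sfL β A C P = P + β • (P * A + Aᵀ * P + ∑ l, (C l)ᵀ * P * C l)
      + (β * β) • (Aᵀ * P * A) := by
  rw [sfL_apply, transpose_add, transpose_one, transpose_smul]
  simp only [add_mul, mul_add, one_mul, mul_one, smul_mul_assoc, mul_smul_comm, smul_add,
    smul_smul]
  abel

/-- transpose as a linear map -/
def transL : Matrix (Fin n) (Fin n) ℝ →ₗ[ℝ] Matrix (Fin n) (Fin n) ℝ where
  toFun M := Mᵀ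
  map_add' a b := transpose_add a b
  map_smul' c a := transpose_smul c a

/-- quadratic form as a linear map in the matrix -/
def qfLin (x : Fin n → ℝ) : Matrix (Fin n) (Fin n) ℝ →ₗ[ℝ] ℝ where
  toFun M := qf M x
  map_add' a b := qf_add a b x
  map_smul' c a := qf_smul c a x

lemma continuous_transpose :
    Continuous (fun M : Matrix (Fin n) (Fin n) ℝ => Mᵀ) :=
  (LinearMap.toContinuousLinearMap (transL (n := n))).continuous

lemma continuous_qf_matrix (x : Fin n → ℝ) :
    Continuous (fun M : Matrix (Fin n) (Fin n) ℝ => qf M x) :=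
  (LinearMap.toContinuousLinearMap (qfLin x)).continuous

lemma psd_of_tendsto {Z : ℕ → Matrix (Fin n) (Fin n) ℝ} {L : Matrix (Fin n) (Fin n) ℝ}
    (h : Filter.Tendsto Z Filter.atTop (nhds L)) (hZ : ∀ k, (Z k).PosSemidef) :
    L.PosSemidef := by
  refine psd_of_qf ?_ fun x => ?_
  · have h1 : Filter.Tendsto (fun k => (Z k)ᵀ) Filter.atTop (nhds Lᵀ) :=
      (continuous_transpose.tendsto L).comp h
    have h2 : (fun k => (Z k)ᵀ) = Z := funext fun k => herm_transpose_eq (hZ k).1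
    rw [h2] at h1
    exact tendsto_nhds_unique h1 h
  · exact ge_of_tendsto' (((continuous_qf_matrix x).tendsto L).comp h)
      fun k => psd_qf (hZ k) x

end PartTwoInfra

section KeyBeta

lemma psd_zero : (0 : Matrix (Fin n) (Fin n) ℝ).PosSemidef :=
  psd_of_qf transpose_zero fun x => by rw [qf_zero]

lemma key_beta {r : ℕ} (A : Matrix (Fin n) (Fin n) ℝ) (C : Fin r → Matrix (Fin n) (Fin n) ℝ)
    (Qh : Matrix (Fin n) (Fin n) ℝ) (hQpsd : Qh.PosSemidef)
    (X : Matrix (Fin n) (Fin n) ℝ) (hX : X.PosDef)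
    (hW : (-(X * A + Aᵀ * X + ∑ l, (C l)ᵀ * X * C l)).PosDef) :
    ∃ Λ : ℝ, ∃ β₁ : ℝ, 0 < β₁ ∧ ∀ β : ℝ, 0 < β → β ≤ β₁ →
      ∃ Pb : Matrix (Fin n) (Fin n) ℝ, Pb.PosSemidef ∧ (Λ • X - Pb).PosSemidef ∧
        (Pb * A + Aᵀ * Pb + ∑ l, (C l)ᵀ * Pb * C l) + β • (Aᵀ * Pb * A) + Qh = 0 := by
  have Xt : Xᵀ = X := herm_transpose_eq hX.1
  obtain ⟨δ, hδ, hWlow⟩ := qf_lower hW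
  obtain ⟨c, hc, hXup⟩ := qf_upper X
  obtain ⟨δx, hδx, hXlow⟩ := qf_lower hX
  obtain ⟨ρJ, hρJ, hJup⟩ := qf_upper (Aᵀ * X * A)
  obtain ⟨cQ, hcQ, hQup⟩ := qf_upper Qh
  set γ : ℝ := δ / (2 * c) with hγdef
  have hγ : 0 < γ := by positivity
  set lam : ℝ := cQ / δx with hlamdef
  have hlam : 0 < lam := by positivity
  refine ⟨lam / γ, min (δ / (2 * ρJ)) (c / δ), by positivity, fun β hβ hβ₁ => ?_⟩
  set μ : ℝ := 1 - β * γ with hμdef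
  have hβγ : β * γ ≤ 1 / 2 := by
    have h1 : β ≤ c / δ := le_trans hβ₁ (min_le_right _ _)
    rw [le_div_iff₀ hδ] at h1
    have hγc : γ * (2 * c) = δ := by
      rw [hγdef]; field_simp
    nlinarith
  have hβγpos : 0 < β * γ := mul_pos hβ hγ
  have hμ0 : 0 ≤ μ := by rw [hμdef]; linarith
  have hμ1 : μ < 1 := by rw [hμdef]; linarith
  have hβρ : β * ρJ ≤ δ / 2 := by
    have h1 : β ≤ δ / (2 * ρJ) := le_trans hβ₁ (min_le_left _ _)
    rw [le_div_iff₀ (by positivity)] at h1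
    linarith
  -- the iteration map preserves positive semidefiniteness
  have hSpsd : ∀ P : Matrix (Fin n) (Fin n) ℝ, P.PosSemidef → (sfL β A C P).PosSemidef := by
    intro P hP
    rw [sfL_apply]
    exact (psd_conj hP _).add (psd_smul (psd_sum _ _ fun l _ => psd_conj hP (C l)) hβ.le)
  -- contraction on the certificate X
  have hSX : (μ • X - sfL β A C X).PosSemidef := by
    refine psd_of_qf ?_ fun x => ?_
    · rw [sfL_expand, transpose_sub, transpose_smul, Xt, transpose_add, transpose_add,
        transpose_smul, transpose_smul, transpose_lyap Xt, transpose_conj Xt, Xt]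
    · rw [sfL_expand, qf_sub, qf_smul, qf_add, qf_add, qf_smul, qf_smul]
      have hqL : qf (X * A + Aᵀ * X + ∑ l, (C l)ᵀ * X * C l) x
          = -(qf (-(X * A + Aᵀ * X + ∑ l, (C l)ᵀ * X * C l)) x) := by
        rw [qf_neg]; ring
      rw [hqL]
      have t1 := mul_le_mul_of_nonneg_left (hXup x) hβγpos.le
      have t2 := mul_le_mul_of_nonneg_left (hWlow x) hβ.le
      have t3 := mul_le_mul_of_nonneg_left (hJup x) (mul_nonneg hβ.le hβ.le)
      have t4 : β * γ * (c * (x ⬝ᵥ x)) = β * (δ / 2) * (x ⬝ᵥ x) := by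
        rw [hγdef]; field_simp
      have t5 := mul_le_mul_of_nonneg_left hβρ hβ.le
      have t6 := mul_le_mul_of_nonneg_right t5 (dot_self_nonneg x)
      have hμsub : μ * qf X x = qf X x - β * γ * qf X x := by rw [hμdef]; ring
      linarith [t1, t2, t3, t4, t6, hμsub]
  -- domination of Qh by X
  have hQX : (lam • X - Qh).PosSemidef := by
    refine psd_of_qf ?_ fun x => ?_
    · rw [transpose_sub, transpose_smul, Xt, herm_transpose_eq hQpsd.1]
    · rw [qf_sub, qf_smul]
      have t1 := mul_le_mul_of_nonneg_left (hXlow x) hlam.le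
      have t2 : lam * (δx * (x ⬝ᵥ x)) = cQ * (x ⬝ᵥ x) := by
        rw [hlamdef]; field_simp
      have t3 := hQup x
      linarith
  -- the iteration
  set f : ℕ → Matrix (Fin n) (Fin n) ℝ := fun k => (⇑(sfL β A C))^[k] Qh with hfdef
  have hf0 : f 0 = Qh := rfl
  have hfs : ∀ k, f (k + 1) = sfL β A C (f k) := fun k =>
    Function.iterate_succ_apply' _ _ _
  have hIter : ∀ k, (f k).PosSemidef ∧ ((lam * μ ^ k) • X - f k).PosSemidef := by
    intro k
    induction k with
    | zero =>
      refine ⟨hf0 ▸ hQpsd, ?_⟩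
      rw [hf0, pow_zero, mul_one]
      exact hQX
    | succ k ih =>
      refine ⟨hfs k ▸ hSpsd _ ih.1, ?_⟩
      rw [hfs k]
      have e : (lam * μ ^ (k + 1)) • X - sfL β A C (f k)
          = (lam * μ ^ k) • (μ • X - sfL β A C X)
            + sfL β A C ((lam * μ ^ k) • X - f k) := by
        rw [map_sub, _root_.map_smul, smul_sub, smul_smul, pow_succ]
        rw [show lam * (μ ^ k * μ) = lam * μ ^ k * μ from by ring]
        abel
      rw [e]
      exact (psd_smul hSX (mul_nonneg hlam.le (pow_nonneg hμ0 k))).add (hSpsd _ ih.2)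
  -- summability
  have hnorm : ∀ k, ‖f k‖ ≤ (lam * X.trace) * μ ^ k := by
    intro k
    have h := psd_norm_le (hIter k).1 (hIter k).2
    rw [Matrix.trace_smul, smul_eq_mul] at h
    calc ‖f k‖ ≤ lam * μ ^ k * X.trace := h
    _ = (lam * X.trace) * μ ^ k := by ring
  have hsum : Summable f :=
    Summable.of_norm_bounded ((summable_geometric_of_lt_one hμ0 hμ1).mul_left _) hnorm
  set Pσ : Matrix (Fin n) (Fin n) ℝ := ∑' k, f k with hPσdef
  -- Pσ is PSD
  have hPσpsd : Pσ.PosSemidef := by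
    refine psd_of_qf ?_ fun x => ?_
    · have h1 := (LinearMap.toContinuousLinearMap (transL (n := n))).map_tsum hsum
      have h2 : ∀ M : Matrix (Fin n) (Fin n) ℝ,
          LinearMap.toContinuousLinearMap (transL (n := n)) M = Mᵀ := fun M => rfl
      rw [hPσdef]
      calc (∑' k, f k)ᵀ = ∑' k, (f k)ᵀ := by
            rw [← h2 (∑' k, f k), h1]
            exact tsum_congr fun k => by rw [h2]
      _ = ∑' k, f k := tsum_congr fun k => herm_transpose_eq (hIter k).1.1
    · have h1 := (LinearMap.toContinuousLinearMap (qfLin x)).map_tsum hsum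
      have h2 : ∀ M : Matrix (Fin n) (Fin n) ℝ,
          LinearMap.toContinuousLinearMap (qfLin x) M = qf M x := fun M => rfl
      have h3 : qf Pσ x = ∑' k, qf (f k) x := by
        rw [hPσdef, ← h2 (∑' k, f k), h1]
        exact tsum_congr fun k => by rw [h2]
      rw [h3]
      exact tsum_nonneg fun k => psd_qf (hIter k).1 x
  -- uniform bound on Pσ
  have hPσbound : ((lam * (β * γ)⁻¹) • X - Pσ).PosSemidef := by
    have hgeo : ∀ K, (∑ k ∈ Finset.range K, μ ^ k) ≤ (β * γ)⁻¹ := by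
      intro K
      have h1 : ∑ k ∈ Finset.range K, μ ^ k ≤ ∑' k, μ ^ k :=
        Summable.sum_le_tsum _ (fun k _ => pow_nonneg hμ0 k) (summable_geometric_of_lt_one hμ0 hμ1)
      rw [tsum_geometric_of_lt_one hμ0 hμ1] at h1
      have h2 : 1 - μ = β * γ := by rw [hμdef]; ring
      rwa [h2] at h1
    have hpartial : ∀ K, ((lam * ∑ k ∈ Finset.range K, μ ^ k) • X
        - ∑ k ∈ Finset.range K, f k).PosSemidef := by
      intro K
      induction K with
      | zero => simpa using psd_zero
      | succ K ih =>
        rw [Finset.sum_range_succ, Finset.sum_range_succ]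
        have e : (lam * (∑ k ∈ Finset.range K, μ ^ k + μ ^ K)) • X
            - (∑ k ∈ Finset.range K, f k + f K)
            = ((lam * ∑ k ∈ Finset.range K, μ ^ k) • X - ∑ k ∈ Finset.range K, f k)
              + ((lam * μ ^ K) • X - f K) := by
          rw [mul_add, add_smul]
          abel
        rw [e]
        exact ih.add (hIter K).2
    have hnice : ∀ K, ((lam * (β * γ)⁻¹) • X - ∑ k ∈ Finset.range K, f k).PosSemidef := by
      intro K
      have e : (lam * (β * γ)⁻¹) • X - ∑ k ∈ Finset.range K, f k
          = (lam * (β * γ)⁻¹ - lam * ∑ k ∈ Finset.range K, μ ^ k) • X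
            + ((lam * ∑ k ∈ Finset.range K, μ ^ k) • X - ∑ k ∈ Finset.range K, f k) := by
        rw [sub_smul]
        abel
      rw [e]
      refine (psd_smul hX.posSemidef ?_).add (hpartial K)
      have := mul_le_mul_of_nonneg_left (hgeo K) hlam.le
      linarith
    have htend : Filter.Tendsto (fun K => ∑ k ∈ Finset.range K, f k)
        Filter.atTop (nhds Pσ) := hsum.hasSum.tendsto_sum_nat
    have htend2 : Filter.Tendsto (fun K => (lam * (β * γ)⁻¹) • X - ∑ k ∈ Finset.range K, f k)
        Filter.atTop (nhds ((lam * (β * γ)⁻¹) • X - Pσ)) :=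
      Filter.Tendsto.sub tendsto_const_nhds htend
    exact psd_of_tendsto htend2 hnice
  -- the fixed point equation
  have hrec : Pσ = Qh + sfL β A C Pσ := by
    have h1 := Summable.tsum_eq_zero_add hsum
    have h3 : ∑' k, f (k + 1) = sfL β A C Pσ := by
      have h4 : ∑' k, f (k + 1) = ∑' k, sfL β A C (f k) := tsum_congr fun k => hfs k
      have h5 := (LinearMap.toContinuousLinearMap (sfL β A C)).map_tsum hsum
      have h6 : ∀ M : Matrix (Fin n) (Fin n) ℝ,
          LinearMap.toContinuousLinearMap (sfL β A C) M = sfL β A C M := fun M => rfl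
      rw [h4]
      calc ∑' k, sfL β A C (f k) = ∑' k, LinearMap.toContinuousLinearMap (sfL β A C) (f k) :=
            tsum_congr fun k => (h6 _).symm
      _ = LinearMap.toContinuousLinearMap (sfL β A C) (∑' k, f k) := h5.symm
      _ = sfL β A C Pσ := by rw [h6, hPσdef]
    rw [hPσdef]
    calc ∑' k, f k = f 0 + ∑' k, f (k + 1) := h1
    _ = Qh + sfL β A C Pσ := by rw [hf0, h3]
  -- assemble
  refine ⟨β • Pσ, psd_smul hPσpsd hβ.le, ?_, ?_⟩
  · have e : (lam / γ) • X - β • Pσ = β • ((lam * (β * γ)⁻¹) • X - Pσ) := by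
      rw [smul_sub, smul_smul]
      have : β * (lam * (β * γ)⁻¹) = lam / γ := by
        field_simp
      rw [this]
    rw [e]
    exact psd_smul hPσbound hβ.le
  · have hQeq : Qh = Pσ - sfL β A C Pσ := by
      rw [eq_sub_iff_add_eq]
      exact hrec.symm
    rw [sfL_expand] at hQeq
    have hQeq2 : Qh = -(β • (Pσ * A + Aᵀ * Pσ + ∑ l, (C l)ᵀ * Pσ * C l))
        - (β * β) • (Aᵀ * Pσ * A) := by
      rw [hQeq]; abel
    have hsm1 : (β • Pσ) * A = β • (Pσ * A) := smul_mul_assoc β Pσ A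
    have hsm2 : Aᵀ * (β • Pσ) = β • (Aᵀ * Pσ) := mul_smul_comm β Aᵀ Pσ
    have hsm3 : ∑ l, (C l)ᵀ * (β • Pσ) * C l = β • ∑ l, (C l)ᵀ * Pσ * C l := by
      rw [Finset.smul_sum]
      refine Finset.sum_congr rfl fun l _ => ?_
      rw [mul_smul_comm, smul_mul_assoc]
    have hsm4 : Aᵀ * (β • Pσ) * A = β • (Aᵀ * Pσ * A) := by
      rw [mul_smul_comm, smul_mul_assoc]
    rw [hsm1, hsm3, hsm4, hsm2, hQeq2]
    simp only [smul_add, smul_smul, smul_sub, smul_neg]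
    abel

end KeyBeta

section PartTwo

variable {q r : ℕ}

lemma partII (A : Matrix (Fin n) (Fin n) ℝ) (C : Fin r → Matrix (Fin n) (Fin n) ℝ)
    (E0 : Matrix (Fin q) (Fin n) ℝ) (E : Fin r → Matrix (Fin q) (Fin n) ℝ)
    (X : Matrix (Fin n) (Fin n) ℝ) (hX : X.PosDef)
    (hW : (-(X * A + Aᵀ * X + ∑ l, (C l)ᵀ * X * C l)).PosDef) :
    ∃ P : Matrix (Fin n) (Fin n) ℝ, P.PosSemidef ∧
      P * A + Aᵀ * P + ∑ l, (C l)ᵀ * P * C l + (E0ᵀ * E0 + ∑ l, (E l)ᵀ * E l) = 0 := by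
  have hW' : (-(X * A + Aᵀ * X + ∑ l, (C l)ᵀ * X * C l)).PosDef := hW
  set Qh : Matrix (Fin n) (Fin n) ℝ := E0ᵀ * E0 + ∑ l, (E l)ᵀ * E l with hQhdef
  have hQpsd : Qh.PosSemidef :=
    (psd_gram E0).add (psd_sum _ _ fun l _ => psd_gram (E l))
  obtain ⟨Λ, β₁, hβ₁, hkey⟩ := key_beta A C Qh hQpsd X hX hW'
  set βs : ℕ → ℝ := fun m => β₁ / (m + 1) with hβsdef
  have hβspos : ∀ m : ℕ, 0 < βs m := fun m => by positivity
  have hβsle : ∀ m : ℕ, βs m ≤ β₁ := fun m => by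
    rw [hβsdef]
    exact div_le_self hβ₁.le (by push_cast; linarith [Nat.cast_nonneg (α := ℝ) m])
  choose Ps hP1 hP2 hP3 using fun m => hkey (βs m) (hβspos m) (hβsle m)
  -- boundedness
  have hmem : ∀ m, Ps m ∈ Metric.closedBall (0 : Matrix (Fin n) (Fin n) ℝ) ((Λ • X).trace) := by
    intro m
    rw [Metric.mem_closedBall, dist_zero_right]
    exact psd_norm_le (hP1 m) (hP2 m)
  obtain ⟨L, _, φ, hφ, htend⟩ :=
    tendsto_subseq_of_bounded Metric.isBounded_closedBall hmem
  have hLpsd : L.PosSemidef := psd_of_tendsto htend fun k => hP1 (φ k)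
  -- pass to the limit in the equation
  have hβs0 : Filter.Tendsto (fun m => βs (φ m)) Filter.atTop (nhds 0) := by
    have h1 : Filter.Tendsto βs Filter.atTop (nhds 0) := by
      have h2 : βs = fun m : ℕ => β₁ * (1 / (m + 1)) := by
        funext m; rw [hβsdef]; ring
      rw [h2]
      have := tendsto_one_div_add_atTop_nhds_zero_nat.const_mul β₁
      simpa using this
    exact h1.comp hφ.tendsto_atTop
  have hcont1 : Continuous (fun P : Matrix (Fin n) (Fin n) ℝ =>
      P * A + Aᵀ * P + ∑ l, (C l)ᵀ * P * C l) := by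
    have h1 : Continuous (⇑(lyapL A C)) := (lyapL A C).continuous_of_finiteDimensional
    have h2 : ⇑(lyapL A C) = fun P : Matrix (Fin n) (Fin n) ℝ =>
        P * A + Aᵀ * P + ∑ l, (C l)ᵀ * P * C l := funext (lyapL_apply A C)
    rwa [h2] at h1
  have hcont2 : Continuous (fun P : Matrix (Fin n) (Fin n) ℝ => Aᵀ * P * A) :=
    (sandwichL Aᵀ A).continuous_of_finiteDimensional
  have T1 : Filter.Tendsto (fun m => Ps (φ m) * A + Aᵀ * Ps (φ m)
      + ∑ l, (C l)ᵀ * Ps (φ m) * C l) Filter.atTop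
      (nhds (L * A + Aᵀ * L + ∑ l, (C l)ᵀ * L * C l)) :=
    (hcont1.tendsto L).comp htend
  have T2 : Filter.Tendsto (fun m => βs (φ m) • (Aᵀ * Ps (φ m) * A)) Filter.atTop
      (nhds ((0 : ℝ) • (Aᵀ * L * A))) :=
    Filter.Tendsto.smul hβs0 ((hcont2.tendsto L).comp htend)
  have T3 : Filter.Tendsto (fun m => (Ps (φ m) * A + Aᵀ * Ps (φ m)
      + ∑ l, (C l)ᵀ * Ps (φ m) * C l) + βs (φ m) • (Aᵀ * Ps (φ m) * A) + Qh)
      Filter.atTop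
      (nhds ((L * A + Aᵀ * L + ∑ l, (C l)ᵀ * L * C l) + (0 : ℝ) • (Aᵀ * L * A) + Qh)) :=
    (T1.add T2).add tendsto_const_nhds
  have hval : (fun m => (Ps (φ m) * A + Aᵀ * Ps (φ m)
      + ∑ l, (C l)ᵀ * Ps (φ m) * C l) + βs (φ m) • (Aᵀ * Ps (φ m) * A) + Qh)
      = fun _ => (0 : Matrix (Fin n) (Fin n) ℝ) := funext fun m => hP3 (φ m)
  rw [hval] at T3
  have hfinal := tendsto_nhds_unique T3 tendsto_const_nhds
  refine ⟨L, hLpsd, ?_⟩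
  rw [zero_smul, add_zero] at hfinal
  exact hfinal

end PartTwo


end Aux

/-- under stochastic detectability of `[E_0, …, E_r; A, C_1, …, C_r]`,
mean-square stability of `(A, C_1, …, C_r)` is equivalent to the solvability of the
Lyapunov-type equation by a positive semidefinite matrix. -/
theorem statement7 {n q r : ℕ}
    (A : Matrix (Fin n) (Fin n) ℝ) (C : Fin r → Matrix (Fin n) (Fin n) ℝ)
    (E0 : Matrix (Fin q) (Fin n) ℝ) (E : Fin r → Matrix (Fin q) (Fin n) ℝ)
    (hdet : StochDetectable E0 E A C) :
    MSStable A C ↔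
      ∃ P : Matrix (Fin n) (Fin n) ℝ, P.PosSemidef ∧
        P * A + Aᵀ * P + ∑ l, (C l)ᵀ * P * C l + (E0ᵀ * E0 + ∑ l, (E l)ᵀ * E l) = 0 := by
  constructor
  · rintro ⟨X, hX, hW⟩
    exact partII A C E0 E X hX hW
  · rintro ⟨P, hP, heq⟩
    obtain ⟨Θ, Y, hY, hN⟩ := hdet
    exact partI A C E0 E Θ Y hY hN P hP heq
end
end

section
/- Assume 0 ∈ Dom G. Let L ∈ 𝒜 with associated stabilizing solution P̃_L, and let P, Z be real symmetric n×n matrices such that P ∈ Dom G, P + Z ∈ Dom G, and Z satisfies the inner Riccati equation at P. If the tuple (A + B_1 K_1(P) + B_2 K_2(0) + B_2 L, C_1 + D_{1,1} K_1(P) + D_{1,2} K_2(0) + D_{1,2} L, …, C_r + D_{r,1} K_1(P) + D_{r,2} K_2(0) + D_{r,2} L) is mean-square stable, then P̃_L ⪰ P + Z. -/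
open Matrix BigOperators

noncomputable section

section AuxLemmas


lemma isHermitian_of_isSymm' {k : ℕ} {M : Matrix (Fin k) (Fin k) ℝ} (h : M.IsSymm) :
    M.IsHermitian := by
  rw [Matrix.IsHermitian, Matrix.conjTranspose_eq_transpose_of_trivial]; exact h

lemma dotProduct_self_nonneg' {k : ℕ} (v : Fin k → ℝ) : 0 ≤ v ⬝ᵥ v :=
  Finset.sum_nonneg fun i _ => mul_self_nonneg _

lemma quadContinuous {k : ℕ} (A : Matrix (Fin k) (Fin k) ℝ) :
    Continuous fun v : Fin k → ℝ => v ⬝ᵥ A *ᵥ v := by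
  simp only [dotProduct, Matrix.mulVec, dotProduct]
  exact continuous_finset_sum _ fun i _ =>
    (continuous_apply i).mul (continuous_finset_sum _ fun j _ =>
      (continuous_const.mul (continuous_apply j)))

lemma quad_lower_bound {k : ℕ} (A : Matrix (Fin k) (Fin k) ℝ) :
    ∃ a : ℝ, (∀ v, a * (v ⬝ᵥ v) ≤ v ⬝ᵥ A *ᵥ v) ∧ (A.PosDef → 0 < a) := by
  rcases Nat.eq_zero_or_pos k with hk | hk
  · subst hk
    refine ⟨1, fun v => ?_, fun _ => one_pos⟩
    simp [dotProduct]
  · -- sphere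
    set S : Set (Fin k → ℝ) := {v | v ⬝ᵥ v = 1} with hS
    have hcont : Continuous fun v : Fin k → ℝ => v ⬝ᵥ v := by
      have := quadContinuous (1 : Matrix (Fin k) (Fin k) ℝ)
      simpa [Matrix.one_mulVec] using this
    have hclosed : IsClosed S := by
      have : S = (fun v : Fin k → ℝ => v ⬝ᵥ v) ⁻¹' {1} := rfl
      rw [this]
      exact IsClosed.preimage hcont isClosed_singleton
    have hbdd : Bornology.IsBounded S := by
      apply Bornology.IsBounded.subset (Metric.isBounded_closedBall (x := (0 : Fin k → ℝ)) (r := 1))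
      intro v hv
      simp only [Metric.mem_closedBall, dist_zero_right]
      rw [pi_norm_le_iff_of_nonneg zero_le_one]
      intro i
      rw [Real.norm_eq_abs, abs_le_one_iff_mul_self_le_one]
      calc v i * v i ≤ ∑ j, v j * v j :=
            Finset.single_le_sum (fun j _ => mul_self_nonneg (v j)) (Finset.mem_univ i)
        _ = 1 := hv
    have hcomp : IsCompact S := Metric.isCompact_of_isClosed_isBounded hclosed hbdd
    have hne : S.Nonempty := by
      refine ⟨Pi.single ⟨0, hk⟩ 1, ?_⟩
      simp [hS, dotProduct, Pi.single_apply]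
    obtain ⟨v₀, hv₀S, hmin⟩ := hcomp.exists_isMinOn hne (quadContinuous A).continuousOn
    refine ⟨v₀ ⬝ᵥ A *ᵥ v₀, fun v => ?_, fun hA => hA.dotProduct_mulVec_pos (x := v₀) ?_⟩
    · rcases eq_or_ne v 0 with rfl | hv
      · simp
      · have hvv : 0 < v ⬝ᵥ v := by
          rcases (dotProduct_self_nonneg' v).lt_or_eq with h | h
          · exact h
          · exact absurd (dotProduct_self_eq_zero.mp h.symm) hv
        set t : ℝ := Real.sqrt (v ⬝ᵥ v) with ht
        have htpos : 0 < t := Real.sqrt_pos.mpr hvv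
        have htt : t * t = v ⬝ᵥ v := Real.mul_self_sqrt hvv.le
        set w : Fin k → ℝ := t⁻¹ • v with hw
        have hwS : w ∈ S := by
          simp only [hS, Set.mem_setOf_eq, hw, smul_dotProduct, dotProduct_smul, smul_eq_mul]
          rw [show t⁻¹ * (t⁻¹ * (v ⬝ᵥ v)) = (v ⬝ᵥ v) / (t*t) by field_simp, htt]
          exact div_self hvv.ne'
        have hq : v ⬝ᵥ A *ᵥ v = (t * t) * (w ⬝ᵥ A *ᵥ w) := by
          simp only [hw, smul_dotProduct, dotProduct_smul, Matrix.mulVec_smul, smul_eq_mul]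
          field_simp
        have := hmin hwS
        calc (v₀ ⬝ᵥ A *ᵥ v₀) * (v ⬝ᵥ v) = (v₀ ⬝ᵥ A *ᵥ v₀) * (t * t) := by rw [htt]
          _ ≤ (w ⬝ᵥ A *ᵥ w) * (t * t) := by
              apply mul_le_mul_of_nonneg_right this (by positivity)
          _ = v ⬝ᵥ A *ᵥ v := by rw [hq]; ring
    · intro h0
      rw [h0] at hv₀S
      simp [hS] at hv₀S

lemma posDef_smul' {k : ℕ} {A : Matrix (Fin k) (Fin k) ℝ} {c : ℝ} (hc : 0 < c)
    (hA : A.PosDef) : (c • A).PosDef := by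
  refine Matrix.PosDef.of_dotProduct_mulVec_pos ?_ fun v hv => ?_
  · show (c • A)ᴴ = c • A
    rw [Matrix.conjTranspose_smul, hA.1.eq, star_trivial]
  · rw [Matrix.smul_mulVec, dotProduct_smul, smul_eq_mul]
    exact mul_pos hc (hA.dotProduct_mulVec_pos hv)

lemma star_trivial_vec {k : ℕ} (v : Fin k → ℝ) : star v = v := by
  funext i; simp

section Lyap

variable {k r : ℕ} (F : Matrix (Fin k) (Fin k) ℝ) (G : Fin r → Matrix (Fin k) (Fin k) ℝ)

/-- The Lyapunov-type operator. -/
def Lop (Y : Matrix (Fin k) (Fin k) ℝ) : Matrix (Fin k) (Fin k) ℝ :=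
  Y * F + Fᵀ * Y + ∑ l, (G l)ᵀ * Y * G l

lemma Lop_add_smul (Y X : Matrix (Fin k) (Fin k) ℝ) (c : ℝ) :
    Lop F G (Y + c • X) = Lop F G Y + c • Lop F G X := by
  simp only [Lop, Matrix.add_mul, Matrix.mul_add, Matrix.smul_mul, Matrix.mul_smul,
    Finset.sum_add_distrib, Finset.smul_sum, smul_add]
  abel

lemma Lop_quad_nonneg_of_kernel {Y : Matrix (Fin k) (Fin k) ℝ} (hY : Y.PosSemidef)
    {v : Fin k → ℝ} (hv : Y *ᵥ v = 0) :
    0 ≤ v ⬝ᵥ (Lop F G Y) *ᵥ v := by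
  have hYt : Yᵀ = Y := by
    have := hY.isHermitian
    rwa [Matrix.IsHermitian, Matrix.conjTranspose_eq_transpose_of_trivial] at this
  have h1 : v ⬝ᵥ (Y * F) *ᵥ v = 0 := by
    rw [← Matrix.mulVec_mulVec, dotProduct_mulVec v Y, ← Matrix.mulVec_transpose, hYt, hv]
    simp
  have h2 : v ⬝ᵥ (Fᵀ * Y) *ᵥ v = 0 := by
    rw [← Matrix.mulVec_mulVec, hv]
    simp
  have h3 : ∀ l, 0 ≤ v ⬝ᵥ ((G l)ᵀ * Y * (G l)) *ᵥ v := by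
    intro l
    have : v ⬝ᵥ ((G l)ᵀ * Y * (G l)) *ᵥ v = (G l *ᵥ v) ⬝ᵥ Y *ᵥ (G l *ᵥ v) := by
      rw [← Matrix.mulVec_mulVec, ← Matrix.mulVec_mulVec, dotProduct_mulVec v (G l)ᵀ,
        ← Matrix.mulVec_transpose, Matrix.transpose_transpose]
    rw [this]
    have := hY.dotProduct_mulVec_nonneg (G l *ᵥ v)
    rwa [star_trivial_vec] at this
  simp only [Lop, Matrix.add_mulVec, dotProduct_add, h1, h2, zero_add]
  have hsum : (∑ l : Fin r, (G l)ᵀ * Y * G l) *ᵥ v = ∑ l : Fin r, ((G l)ᵀ * Y * G l) *ᵥ v := by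
    induction (Finset.univ : Finset (Fin r)) using Finset.induction_on with
    | empty => simp [Matrix.zero_mulVec]
    | insert _ _ h ih => simp [Finset.sum_insert h, Matrix.add_mulVec, ih]
  have hds : ∀ (w : Fin r → (Fin k → ℝ)), v ⬝ᵥ (∑ l, w l) = ∑ l, v ⬝ᵥ w l := by
    intro w
    simp only [dotProduct, Finset.sum_apply, Finset.mul_sum]
    exact Finset.sum_comm
  rw [hsum, hds]
  exact Finset.sum_nonneg fun l _ => h3 l

end Lyap

lemma quad_expand {k : ℕ} (Y X : Matrix (Fin k) (Fin k) ℝ) (c : ℝ) (v : Fin k → ℝ) :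
    v ⬝ᵥ (Y + c • X) *ᵥ v = v ⬝ᵥ Y *ᵥ v + c * (v ⬝ᵥ X *ᵥ v) := by
  rw [Matrix.add_mulVec, dotProduct_add, Matrix.smul_mulVec, dotProduct_smul, smul_eq_mul]

lemma lyap_aux {k r : ℕ} {F : Matrix (Fin k) (Fin k) ℝ} {G : Fin r → Matrix (Fin k) (Fin k) ℝ}
    {X Y : Matrix (Fin k) (Fin k) ℝ} (hX : X.PosDef)
    (hLX : (-(Lop F G X)).PosDef)
    (hYh : Y.IsHermitian)
    (hLY : (-(Lop F G Y)).PosDef) :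
    Y.PosSemidef := by
  obtain ⟨a, ha, hapos⟩ := quad_lower_bound X
  have ha0 : 0 < a := hapos hX
  obtain ⟨b, hb, -⟩ := quad_lower_bound Y
  obtain ⟨γ, hγ, -⟩ := quad_lower_bound (-X)
  set β : ℝ := max (-γ) 1 with hβ
  have hβ0 : 0 < β := lt_of_lt_of_le one_pos (le_max_right _ _)
  have hXub : ∀ v, v ⬝ᵥ X *ᵥ v ≤ β * (v ⬝ᵥ v) := by
    intro v
    have h1 := hγ v
    have h2 : v ⬝ᵥ (-X) *ᵥ v = -(v ⬝ᵥ X *ᵥ v) := by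
      rw [Matrix.neg_mulVec, dotProduct_neg]
    have h3 : -γ ≤ β := le_max_left _ _
    have h4 := dotProduct_self_nonneg' v
    nlinarith
  have hherm : ∀ c : ℝ, (Y + c • X).IsHermitian := by
    intro c
    show (Y + c • X)ᴴ = Y + c • X
    rw [Matrix.conjTranspose_add, Matrix.conjTranspose_smul, hYh.eq, hX.1.eq, star_trivial]
  set S : Set ℝ := {c : ℝ | 0 ≤ c ∧ (Y + c • X).PosSemidef} with hSdef
  have hSne : S.Nonempty := by
    refine ⟨max 0 (-b / a), le_max_left _ _, Matrix.PosSemidef.of_dotProduct_mulVec_nonneg (hherm _) fun v => ?_⟩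
    rw [star_trivial_vec, quad_expand]
    have h1 := hb v
    have h2 := ha v
    have h3 : -b / a ≤ max 0 (-b / a) := le_max_right _ _
    have h4 : 0 ≤ max 0 (-b / a) := le_max_left _ _
    have h5 : -b ≤ max 0 (-b / a) * a := by
      have := mul_le_mul_of_nonneg_right h3 ha0.le
      rwa [div_mul_cancel₀ _ ha0.ne'] at this
    have h6 := dotProduct_self_nonneg' v
    nlinarith
  have hSbdd : BddBelow S := ⟨0, fun c hc => hc.1⟩
  set c₀ : ℝ := sInf S with hc₀
  have hc₀0 : 0 ≤ c₀ := le_csInf hSne fun c hc => hc.1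
  have hW : (Y + c₀ • X).PosSemidef := by
    refine Matrix.PosSemidef.of_dotProduct_mulVec_nonneg (hherm _) fun v => ?_
    rw [star_trivial_vec, quad_expand]
    have hX0 : 0 ≤ v ⬝ᵥ X *ᵥ v := by
      have := hX.posSemidef.dotProduct_mulVec_nonneg v; rwa [star_trivial_vec] at this
    by_contra hneg
    push_neg at hneg
    rcases hX0.lt_or_eq with hX0' | hX0'
    · set ε : ℝ := -(v ⬝ᵥ Y *ᵥ v + c₀ * (v ⬝ᵥ X *ᵥ v)) / (2 * (v ⬝ᵥ X *ᵥ v)) with hε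
      have hεpos : 0 < ε := by
        apply div_pos (by linarith) (by linarith)
      obtain ⟨c, hcS, hclt⟩ := (csInf_lt_iff hSbdd hSne).mp (show sInf S < c₀ + ε by linarith)
      have := hcS.2.dotProduct_mulVec_nonneg v
      rw [star_trivial_vec, quad_expand] at this
      have hcge : c₀ ≤ c := csInf_le hSbdd hcS
      have hkey : c * (v ⬝ᵥ X *ᵥ v) ≤ (c₀ + ε) * (v ⬝ᵥ X *ᵥ v) :=
        mul_le_mul_of_nonneg_right hclt.le hX0
      have hε2 : ε * (v ⬝ᵥ X *ᵥ v) = -(v ⬝ᵥ Y *ᵥ v + c₀ * (v ⬝ᵥ X *ᵥ v)) / 2 := by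
        rw [hε]; field_simp
      nlinarith
    · obtain ⟨c, hcS, hclt⟩ := (csInf_lt_iff hSbdd hSne).mp (show sInf S < c₀ + 1 by linarith)
      have := hcS.2.dotProduct_mulVec_nonneg v
      rw [star_trivial_vec, quad_expand] at this
      nlinarith
  have hc₀eq : c₀ = 0 := by
    by_contra hne
    have hc₀pos : 0 < c₀ := hc₀0.lt_of_ne (Ne.symm hne)
    have hLW : (-(Lop F G (Y + c₀ • X))).PosDef := by
      rw [Lop_add_smul, neg_add]
      exact hLY.add_posSemidef
        (by rw [← smul_neg]; exact (posDef_smul' hc₀pos hLX).posSemidef)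
    by_cases hker : ∃ v : Fin k → ℝ, v ≠ 0 ∧ (Y + c₀ • X) *ᵥ v = 0
    · obtain ⟨v, hv, hvker⟩ := hker
      have h1 := Lop_quad_nonneg_of_kernel F G hW hvker
      have h2 := hLW.dotProduct_mulVec_pos hv
      rw [star_trivial_vec, Matrix.neg_mulVec, dotProduct_neg] at h2
      linarith
    · push_neg at hker
      have hWpd : (Y + c₀ • X).PosDef := by
        refine Matrix.PosDef.of_dotProduct_mulVec_pos (hherm _) fun v hv => ?_
        have h0 := hW.dotProduct_mulVec_nonneg v
        rcases h0.lt_or_eq with h | h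
        · rwa [star_trivial_vec] at h
        · exfalso
          exact hker v hv ((hW.dotProduct_mulVec_zero_iff v).mp h.symm)
      obtain ⟨a', ha', ha'pos⟩ := quad_lower_bound (Y + c₀ • X)
      have ha'0 : 0 < a' := ha'pos hWpd
      set δ : ℝ := min c₀ (a' / β) with hδ
      have hδpos : 0 < δ := lt_min hc₀pos (div_pos ha'0 hβ0)
      have hmem : c₀ - δ ∈ S := by
        refine ⟨by simp [hδ], Matrix.PosSemidef.of_dotProduct_mulVec_nonneg (hherm _) fun v => ?_⟩
        rw [star_trivial_vec, quad_expand]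
        have h1 := ha' v
        rw [quad_expand] at h1
        have h2 := hXub v
        have h3 : δ * β ≤ a' := by
          rw [show a' = (a' / β) * β by field_simp]
          exact mul_le_mul_of_nonneg_right (min_le_right _ _) hβ0.le
        have h4 := dotProduct_self_nonneg' v
        have h5 : 0 ≤ δ := hδpos.le
        nlinarith
      have := csInf_le hSbdd hmem
      linarith
  rw [hc₀eq] at hW
  simpa using hW

lemma lyap {k r : ℕ} {F : Matrix (Fin k) (Fin k) ℝ} {G : Fin r → Matrix (Fin k) (Fin k) ℝ}
    (hs : MSStable F G) {Y : Matrix (Fin k) (Fin k) ℝ}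
    (hYh : Y.IsHermitian)
    (hM : (-(Lop F G Y)).PosSemidef) :
    Y.PosSemidef := by
  obtain ⟨X, hX, hLX⟩ := hs
  have hLX' : (-(Lop F G X)).PosDef := hLX
  have key : ∀ ε : ℝ, 0 < ε → (Y + ε • X).PosSemidef := by
    intro ε hε
    apply lyap_aux hX hLX'
    · show (Y + ε • X)ᴴ = Y + ε • X
      rw [Matrix.conjTranspose_add, Matrix.conjTranspose_smul, hYh.eq, hX.1.eq, star_trivial]
    · rw [Lop_add_smul, neg_add]
      exact Matrix.PosDef.posSemidef_add hM (by rw [← smul_neg]; exact posDef_smul' hε hLX')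
  refine Matrix.PosSemidef.of_dotProduct_mulVec_nonneg hYh fun v => ?_
  rw [star_trivial_vec]
  have hX0 : 0 ≤ v ⬝ᵥ X *ᵥ v := by
    have := hX.posSemidef.dotProduct_mulVec_nonneg v; rwa [star_trivial_vec] at this
  by_contra hneg
  push_neg at hneg
  rcases hX0.lt_or_eq with h | h
  · set ε : ℝ := -(v ⬝ᵥ Y *ᵥ v) / (2 * (v ⬝ᵥ X *ᵥ v)) with hε
    have hεpos : 0 < ε := div_pos (by linarith) (by linarith)
    have := (key ε hεpos).dotProduct_mulVec_nonneg v
    rw [star_trivial_vec, quad_expand] at this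
    have : ε * (v ⬝ᵥ X *ᵥ v) = -(v ⬝ᵥ Y *ᵥ v) / 2 := by
      rw [hε]; field_simp
    nlinarith [(key ε hεpos).dotProduct_mulVec_nonneg v, star_trivial_vec v, quad_expand Y X ε v]
  · have := (key 1 one_pos).dotProduct_mulVec_nonneg v
    rw [star_trivial_vec, quad_expand] at this
    nlinarith


lemma comp_sq {p q : ℕ} (Rh : Matrix (Fin q) (Fin q) ℝ) (Sg F : Matrix (Fin q) (Fin p) ℝ)
    (hsym : Rhᵀ = Rh) (hu : IsUnit Rh.det) :
    Fᵀ * Sg + Sgᵀ * F + Fᵀ * Rh * F =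
      -(Sgᵀ * Rh⁻¹ * Sg) + (F + Rh⁻¹ * Sg)ᵀ * Rh * (F + Rh⁻¹ * Sg) := by
  have h2 : Rh⁻¹ᵀ = Rh⁻¹ := by rw [Matrix.transpose_nonsing_inv, hsym]
  rw [Matrix.transpose_add, Matrix.transpose_mul, h2]
  simp only [Matrix.add_mul, Matrix.mul_add, Matrix.mul_assoc,
    Matrix.mul_nonsing_inv_cancel_left _ _ hu, Matrix.nonsing_inv_mul_cancel_left _ _ hu]
  abel

lemma inv_quad_expand {p q : ℕ} (Rh : Matrix (Fin q) (Fin q) ℝ) (N K : Matrix (Fin q) (Fin p) ℝ)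
    (hsym : Rhᵀ = Rh) (hu : IsUnit Rh.det) :
    (N - Rh * K)ᵀ * Rh⁻¹ * (N - Rh * K) =
      Nᵀ * Rh⁻¹ * N - Nᵀ * K - Kᵀ * N + Kᵀ * Rh * K := by
  have h2 : Rh⁻¹ᵀ = Rh⁻¹ := by rw [Matrix.transpose_nonsing_inv, hsym]
  rw [Matrix.transpose_sub, Matrix.transpose_mul, hsym]
  simp only [Matrix.sub_mul, Matrix.mul_sub, Matrix.mul_assoc,
    Matrix.mul_nonsing_inv_cancel_left _ _ hu, Matrix.nonsing_inv_mul_cancel_left _ _ hu, h2]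
  abel

namespace GameData

variable {n m1 m2 r : ℕ} (g : GameData n m1 m2 r)

/-- Closed-loop `A`-matrix for gains `(F1, F2)`. -/
def AF (F1 : Matrix (Fin m1) (Fin n) ℝ) (F2 : Matrix (Fin m2) (Fin n) ℝ) :
    Matrix (Fin n) (Fin n) ℝ := g.A + g.B1 * F1 + g.B2 * F2

/-- Closed-loop `C`-matrices for gains `(F1, F2)`. -/
def CF (F1 : Matrix (Fin m1) (Fin n) ℝ) (F2 : Matrix (Fin m2) (Fin n) ℝ) (l : Fin r) :
    Matrix (Fin n) (Fin n) ℝ := g.C l + g.D1 l * F1 + g.D2 l * F2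

/-- The closed-loop "dissipation" expression. -/
def Dd (Y : Matrix (Fin n) (Fin n) ℝ) (F1 : Matrix (Fin m1) (Fin n) ℝ)
    (F2 : Matrix (Fin m2) (Fin n) ℝ) : Matrix (Fin n) (Fin n) ℝ :=
  Y * g.AF F1 F2 + (g.AF F1 F2)ᵀ * Y + ∑ l, (g.CF F1 F2 l)ᵀ * Y * g.CF F1 F2 l + g.Q
    + F1ᵀ * g.S1 + g.S1ᵀ * F1 + F2ᵀ * g.S2 + g.S2ᵀ * F2
    + F1ᵀ * g.R11 * F1 + F1ᵀ * g.R12 * F2 + F2ᵀ * g.R12ᵀ * F1 + F2ᵀ * g.R22 * F2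

def Gam (Y : Matrix (Fin n) (Fin n) ℝ) (F1 : Matrix (Fin m1) (Fin n) ℝ) :
    Matrix (Fin n) (Fin n) ℝ :=
  Y * (g.A + g.B1 * F1) + (g.A + g.B1 * F1)ᵀ * Y
    + ∑ l, (g.C l + g.D1 l * F1)ᵀ * Y * (g.C l + g.D1 l * F1) + g.Q
    + F1ᵀ * g.S1 + g.S1ᵀ * F1 + F1ᵀ * g.R11 * F1

def Sig2 (Y : Matrix (Fin n) (Fin n) ℝ) (F1 : Matrix (Fin m1) (Fin n) ℝ) :
    Matrix (Fin m2) (Fin n) ℝ := g.S2P Y + g.R21P Y * F1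

def Gam1 (Y : Matrix (Fin n) (Fin n) ℝ) (F2 : Matrix (Fin m2) (Fin n) ℝ) :
    Matrix (Fin n) (Fin n) ℝ :=
  Y * (g.A + g.B2 * F2) + (g.A + g.B2 * F2)ᵀ * Y
    + ∑ l, (g.C l + g.D2 l * F2)ᵀ * Y * (g.C l + g.D2 l * F2) + g.Q
    + F2ᵀ * g.S2 + g.S2ᵀ * F2 + F2ᵀ * g.R22 * F2

def Sig1 (Y : Matrix (Fin n) (Fin n) ℝ) (F2 : Matrix (Fin m2) (Fin n) ℝ) :
    Matrix (Fin m1) (Fin n) ℝ := g.S1P Y + g.R12P Y * F2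

lemma S1P_zero : g.S1P 0 = g.S1 := by simp [S1P]
lemma S2P_zero : g.S2P 0 = g.S2 := by simp [S2P]
lemma R11P_zero : g.R11P 0 = g.R11 := by simp [R11P]
lemma R12P_zero : g.R12P 0 = g.R12 := by simp [R12P]
lemma R21P_zero : g.R21P 0 = g.R12ᵀ := by simp [R21P]
lemma R22P_zero : g.R22P 0 = g.R22 := by simp [R22P]

variable {Y : Matrix (Fin n) (Fin n) ℝ}

lemma R11P_transpose (hY : Yᵀ = Y) : (g.R11P Y)ᵀ = g.R11P Y := by
  simp [R11P, Matrix.transpose_add, Matrix.transpose_sum, Matrix.transpose_mul,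
    Matrix.mul_assoc, hY, g.hR11.eq]

lemma R22P_transpose (hY : Yᵀ = Y) : (g.R22P Y)ᵀ = g.R22P Y := by
  simp [R22P, Matrix.transpose_add, Matrix.transpose_sum, Matrix.transpose_mul,
    Matrix.mul_assoc, hY, g.hR22.eq]

lemma R12P_transpose (hY : Yᵀ = Y) : (g.R12P Y)ᵀ = g.R21P Y := by
  simp [R12P, R21P, Matrix.transpose_add, Matrix.transpose_sum, Matrix.transpose_mul,
    Matrix.mul_assoc, hY]

lemma RP_transpose (hY : Yᵀ = Y) : (g.RP Y)ᵀ = g.RP Y := by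
  rw [RP, Matrix.fromBlocks_transpose, g.R11P_transpose hY, g.R22P_transpose hY,
    g.R12P_transpose hY, ← g.R12P_transpose hY, Matrix.transpose_transpose]

lemma RP_isUnit (hY : Yᵀ = Y) (hdom : g.MemDomG Y) : IsUnit (g.RP Y).det := by
  rw [isUnit_iff_ne_zero]
  intro hdet
  obtain ⟨v, hv0, hv⟩ := Matrix.exists_mulVec_eq_zero_iff.mpr hdet
  set x : Fin m1 → ℝ := v ∘ Sum.inl with hx
  set y : Fin m2 → ℝ := v ∘ Sum.inr with hy
  have hvelim : v = Sum.elim x y := by funext i; rcases i with i | i <;> rfl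
  rw [hvelim, RP, Matrix.fromBlocks_mulVec] at hv
  simp only [Sum.elim_comp_inl, Sum.elim_comp_inr] at hv
  have h1 : g.R11P Y *ᵥ x + g.R12P Y *ᵥ y = 0 := by
    funext i; exact congrFun hv (Sum.inl i)
  have h2 : g.R21P Y *ᵥ x + g.R22P Y *ᵥ y = 0 := by
    funext i; exact congrFun hv (Sum.inr i)
  have e1 : x ⬝ᵥ (g.R11P Y *ᵥ x) + x ⬝ᵥ (g.R12P Y *ᵥ y) = 0 := by
    rw [← dotProduct_add, h1, dotProduct_zero]
  have e2 : y ⬝ᵥ (g.R21P Y *ᵥ x) + y ⬝ᵥ (g.R22P Y *ᵥ y) = 0 := by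
    rw [← dotProduct_add, h2, dotProduct_zero]
  have hcross : x ⬝ᵥ (g.R12P Y *ᵥ y) = y ⬝ᵥ (g.R21P Y *ᵥ x) := by
    rw [← g.R12P_transpose hY, dotProduct_mulVec x, ← Matrix.mulVec_transpose,
      dotProduct_comm]
  have hx11 : x ⬝ᵥ (g.R11P Y *ᵥ x) = y ⬝ᵥ (g.R22P Y *ᵥ y) := by linarith
  have hxz : x = 0 := by
    by_contra hxne
    have hpos := hdom.2.dotProduct_mulVec_pos hxne
    rw [star_trivial_vec, Matrix.neg_mulVec, dotProduct_neg] at hpos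
    have hyy : 0 ≤ y ⬝ᵥ (g.R22P Y *ᵥ y) := by
      have := hdom.1.posSemidef.dotProduct_mulVec_nonneg y; rwa [star_trivial_vec] at this
    linarith
  have hyz : y = 0 := by
    by_contra hyne
    have hpos := hdom.1.dotProduct_mulVec_pos hyne
    rw [star_trivial_vec] at hpos
    have hxx : 0 ≤ x ⬝ᵥ ((-(g.R11P Y)) *ᵥ x) := by
      have := hdom.2.posSemidef.dotProduct_mulVec_nonneg x; rwa [star_trivial_vec] at this
    rw [Matrix.neg_mulVec, dotProduct_neg] at hxx
    linarith
  apply hv0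
  rw [hvelim, hxz, hyz]
  funext i; rcases i with i | i <;> rfl

lemma KP_eq_fromRows : g.KP Y = Matrix.fromRows (g.K1 Y) (g.K2 Y) := by
  ext i j
  rcases i with i | i <;> rfl

lemma RP_mul_KP (hu : IsUnit (g.RP Y).det) : g.RP Y * g.KP Y = -(g.SP Y) := by
  rw [KP, Matrix.mul_neg, Matrix.mul_nonsing_inv_cancel_left _ _ hu]

lemma K_rel1 (hu : IsUnit (g.RP Y).det) :
    g.R11P Y * g.K1 Y + g.R12P Y * g.K2 Y = -(g.S1P Y) := by
  have h := g.RP_mul_KP (Y := Y) hu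
  rw [g.KP_eq_fromRows, RP, Matrix.fromBlocks_mul_fromRows, SP, Matrix.fromRows_neg] at h
  exact ((Matrix.fromRows_ext_iff _ _ _ _).mp h).1

lemma K_rel2 (hu : IsUnit (g.RP Y).det) :
    g.R21P Y * g.K1 Y + g.R22P Y * g.K2 Y = -(g.S2P Y) := by
  have h := g.RP_mul_KP (Y := Y) hu
  rw [g.KP_eq_fromRows, RP, Matrix.fromBlocks_mul_fromRows, SP, Matrix.fromRows_neg] at h
  exact ((Matrix.fromRows_ext_iff _ _ _ _).mp h).2

lemma SRS (hY : Yᵀ = Y) (hu : IsUnit (g.RP Y).det) :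
    (g.SP Y)ᵀ * (g.RP Y)⁻¹ * g.SP Y =
      (g.K1 Y)ᵀ * g.R11P Y * g.K1 Y + (g.K1 Y)ᵀ * g.R12P Y * g.K2 Y
        + (g.K2 Y)ᵀ * g.R21P Y * g.K1 Y + (g.K2 Y)ᵀ * g.R22P Y * g.K2 Y := by
  have hS : g.SP Y = -(g.RP Y * g.KP Y) := by rw [g.RP_mul_KP hu, neg_neg]
  rw [hS, Matrix.transpose_neg, Matrix.transpose_mul, g.RP_transpose hY,
    Matrix.neg_mul, Matrix.neg_mul, Matrix.mul_neg, neg_neg]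
  simp only [Matrix.mul_assoc, Matrix.nonsing_inv_mul_cancel_left _ _ hu]
  rw [g.KP_eq_fromRows, RP, Matrix.fromBlocks_mul_fromRows, Matrix.transpose_fromRows,
    Matrix.fromCols_mul_fromRows]
  simp only [Matrix.mul_add, Matrix.add_mul, Matrix.mul_assoc]
  abel

lemma Dd_add (Z' : Matrix (Fin n) (Fin n) ℝ) (F1 : Matrix (Fin m1) (Fin n) ℝ)
    (F2 : Matrix (Fin m2) (Fin n) ℝ) :
    g.Dd (Y + Z') F1 F2 = g.Dd Y F1 F2
      + (Z' * g.AF F1 F2 + (g.AF F1 F2)ᵀ * Z'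
          + ∑ l, (g.CF F1 F2 l)ᵀ * Z' * g.CF F1 F2 l) := by
  simp only [Dd, Matrix.add_mul, Matrix.mul_add, Finset.sum_add_distrib]
  abel

lemma E1 (hY : Yᵀ = Y) (F1 : Matrix (Fin m1) (Fin n) ℝ) (F2 : Matrix (Fin m2) (Fin n) ℝ) :
    g.Dd Y F1 F2 = g.Gam Y F1 + F2ᵀ * g.Sig2 Y F1 + (g.Sig2 Y F1)ᵀ * F2
      + F2ᵀ * g.R22P Y * F2 := by
  simp only [Dd, Gam, Sig2, AF, CF, S2P, R21P, R22P,
    Matrix.add_mul, Matrix.mul_add, Matrix.transpose_add, Matrix.transpose_mul,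
    Matrix.transpose_sum, Matrix.transpose_transpose, Matrix.sum_mul, Matrix.mul_sum,
    Finset.sum_add_distrib, Matrix.mul_assoc, hY]
  abel

lemma E2 (hY : Yᵀ = Y) (F1 : Matrix (Fin m1) (Fin n) ℝ) (F2 : Matrix (Fin m2) (Fin n) ℝ) :
    g.Dd Y F1 F2 = g.Gam1 Y F2 + F1ᵀ * g.Sig1 Y F2 + (g.Sig1 Y F2)ᵀ * F1
      + F1ᵀ * g.R11P Y * F1 := by
  simp only [Dd, Gam1, Sig1, AF, CF, S1P, R12P, R11P,
    Matrix.add_mul, Matrix.mul_add, Matrix.transpose_add, Matrix.transpose_mul,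
    Matrix.transpose_sum, Matrix.transpose_transpose, Matrix.sum_mul, Matrix.mul_sum,
    Finset.sum_add_distrib, Matrix.mul_assoc, hY]
  abel

lemma Sig2_PK (hu : IsUnit (g.RP Y).det) :
    g.Sig2 Y (g.K1 Y) = -(g.R22P Y * g.K2 Y) := by
  have h := g.K_rel2 (Y := Y) hu
  rw [Sig2]
  rw [show g.S2P Y = -(g.R21P Y * g.K1 Y + g.R22P Y * g.K2 Y) by rw [h, neg_neg]]
  abel

lemma GamK {P : Matrix (Fin n) (Fin n) ℝ} (hP : Pᵀ = P) (hu : IsUnit (g.RP P).det) :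
    g.Gam P (g.K1 P) - (g.K2 P)ᵀ * (g.R22P P * g.K2 P) = g.GP P := by
  have h := g.K_rel1 (Y := P) hu
  rw [S1P] at h
  have hS1 : g.S1 = -(g.B1ᵀ * P + ∑ l, (g.D1 l)ᵀ * P * g.C l)
      - (g.R11P P * g.K1 P + g.R12P P * g.K2 P) := by
    rw [h]; abel
  rw [GP, g.SRS hP hu]
  simp only [Gam, R11P, R12P, R21P, R22P, hS1, sub_eq_add_neg, neg_add, neg_neg,
    Matrix.add_mul, Matrix.mul_add, Matrix.transpose_add, Matrix.transpose_mul,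
    Matrix.transpose_neg, Matrix.transpose_sum, Matrix.transpose_transpose,
    Matrix.neg_mul, Matrix.mul_neg, Matrix.sum_mul, Matrix.mul_sum,
    Finset.sum_add_distrib, Finset.sum_neg_distrib, Matrix.mul_assoc, hP,
    g.hR11.eq, g.hR22.eq, g.hQ.eq]
  abel

lemma Dd_PKK {P : Matrix (Fin n) (Fin n) ℝ} (hP : Pᵀ = P) (hu : IsUnit (g.RP P).det) :
    g.Dd P (g.K1 P) (g.K2 P) = g.GP P := by
  rw [g.E1 hP, g.Sig2_PK hu, ← g.GamK hP hu]
  simp only [Matrix.transpose_neg, Matrix.transpose_mul, g.R22P_transpose hP,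
    Matrix.mul_neg, Matrix.neg_mul, Matrix.mul_assoc, sub_eq_add_neg]
  abel

lemma AF_KK (P : Matrix (Fin n) (Fin n) ℝ) : g.AF (g.K1 P) (g.K2 P) = g.AK P := rfl

lemma CF_KK (P : Matrix (Fin n) (Fin n) ℝ) (l : Fin r) :
    g.CF (g.K1 P) (g.K2 P) l = g.CK P l := rfl

lemma Dd_WKK {P Z : Matrix (Fin n) (Fin n) ℝ} (hP : Pᵀ = P) (hu : IsUnit (g.RP P).det) :
    g.Dd (P + Z) (g.K1 P) (g.K2 P) = g.GP P
      + (Z * g.AK P + (g.AK P)ᵀ * Z + ∑ l, (g.CK P l)ᵀ * Z * g.CK P l) := by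
  rw [g.Dd_add, g.Dd_PKK hP hu, g.AF_KK]
  congr 2

lemma N2_eq {P Z : Matrix (Fin n) (Fin n) ℝ} (hu : IsUnit (g.RP P).det) :
    g.N2 P Z = g.Sig2 (P + Z) (g.K1 P) + g.R22P (P + Z) * g.K2 P := by
  have h := g.K_rel2 (Y := P) hu
  rw [S2P] at h
  have hS2 : g.S2 = -(g.B2ᵀ * P + ∑ l, (g.D2 l)ᵀ * P * g.C l)
      - (g.R21P P * g.K1 P + g.R22P P * g.K2 P) := by
    rw [h]; abel
  simp only [N2, Sig2, CK, S2P, R21P, R22P, hS2, sub_eq_add_neg, neg_add, neg_neg,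
    Matrix.add_mul, Matrix.mul_add, Matrix.transpose_add, Matrix.transpose_mul,
    Matrix.neg_mul, Matrix.mul_neg, Matrix.sum_mul, Matrix.mul_sum,
    Finset.sum_add_distrib, Finset.sum_neg_distrib, Matrix.mul_assoc]
  abel

lemma B1main {P Z : Matrix (Fin n) (Fin n) ℝ} (hP : Pᵀ = P) (hZs : Zᵀ = Z)
    (hu : IsUnit (g.RP P).det) (hu2 : IsUnit (g.R22P (P + Z)).det)
    (hinner : g.InnerRiccati P Z) :
    g.Gam (P + Z) (g.K1 P)
      - (g.Sig2 (P + Z) (g.K1 P))ᵀ * (g.R22P (P + Z))⁻¹ * g.Sig2 (P + Z) (g.K1 P) = 0 := by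
  have hW : (P + Z)ᵀ = P + Z := by rw [Matrix.transpose_add, hP, hZs]
  have hSg : g.Sig2 (P + Z) (g.K1 P) = g.N2 P Z - g.R22P (P + Z) * g.K2 P := by
    rw [g.N2_eq hu]; abel
  have hGam : g.Gam (P + Z) (g.K1 P) = g.GP P
      + (Z * g.AK P + (g.AK P)ᵀ * Z + ∑ l, (g.CK P l)ᵀ * Z * g.CK P l)
      - ((g.K2 P)ᵀ * g.Sig2 (P + Z) (g.K1 P) + (g.Sig2 (P + Z) (g.K1 P))ᵀ * g.K2 P
          + (g.K2 P)ᵀ * g.R22P (P + Z) * g.K2 P) := by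
    rw [← g.Dd_WKK hP hu, g.E1 hW]; abel
  rw [InnerRiccati] at hinner
  have key : g.Gam (P + Z) (g.K1 P)
      - (g.Sig2 (P + Z) (g.K1 P))ᵀ * (g.R22P (P + Z))⁻¹ * g.Sig2 (P + Z) (g.K1 P)
      = g.GP P + Z * g.AK P + (g.AK P)ᵀ * Z + ∑ l, (g.CK P l)ᵀ * Z * g.CK P l
        - (g.N2 P Z)ᵀ * (g.R22P (P + Z))⁻¹ * g.N2 P Z := by
    rw [hGam, hSg, inv_quad_expand _ _ _ (g.R22P_transpose hW) hu2]
    simp only [Matrix.transpose_sub, Matrix.transpose_add, Matrix.transpose_neg,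
      Matrix.transpose_mul, g.R22P_transpose hW, Matrix.sub_mul, Matrix.mul_sub,
      Matrix.add_mul, Matrix.mul_add, Matrix.neg_mul, Matrix.mul_neg,
      sub_eq_add_neg, neg_add, neg_neg, Matrix.mul_assoc]
    abel
  rw [key, hinner]

lemma mainB {P Z : Matrix (Fin n) (Fin n) ℝ} (hP : Pᵀ = P) (hZs : Zᵀ = Z)
    (hu : IsUnit (g.RP P).det) (hu2 : IsUnit (g.R22P (P + Z)).det)
    (hinner : g.InnerRiccati P Z) (F2 : Matrix (Fin m2) (Fin n) ℝ) :
    g.Dd (P + Z) (g.K1 P) F2 =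
      (F2 + (g.R22P (P + Z))⁻¹ * g.Sig2 (P + Z) (g.K1 P))ᵀ * g.R22P (P + Z)
        * (F2 + (g.R22P (P + Z))⁻¹ * g.Sig2 (P + Z) (g.K1 P)) := by
  have hW : (P + Z)ᵀ = P + Z := by rw [Matrix.transpose_add, hP, hZs]
  have hc := comp_sq (g.R22P (P + Z)) (g.Sig2 (P + Z) (g.K1 P)) F2
    (g.R22P_transpose hW) hu2
  have h1 : g.Dd (P + Z) (g.K1 P) F2 = g.Gam (P + Z) (g.K1 P)
      + (F2ᵀ * g.Sig2 (P + Z) (g.K1 P) + (g.Sig2 (P + Z) (g.K1 P))ᵀ * F2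
          + F2ᵀ * g.R22P (P + Z) * F2) := by
    rw [g.E1 hW]; abel
  rw [h1, hc]
  have h2 := g.B1main hP hZs hu hu2 hinner
  have h3 : g.Gam (P + Z) (g.K1 P)
      - (g.Sig2 (P + Z) (g.K1 P))ᵀ * (g.R22P (P + Z))⁻¹ * g.Sig2 (P + Z) (g.K1 P) = 0 := h2
  calc g.Gam (P + Z) (g.K1 P)
      + (-((g.Sig2 (P + Z) (g.K1 P))ᵀ * (g.R22P (P + Z))⁻¹ * g.Sig2 (P + Z) (g.K1 P))
        + (F2 + (g.R22P (P + Z))⁻¹ * g.Sig2 (P + Z) (g.K1 P))ᵀ * g.R22P (P + Z)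
          * (F2 + (g.R22P (P + Z))⁻¹ * g.Sig2 (P + Z) (g.K1 P)))
      = (g.Gam (P + Z) (g.K1 P)
          - (g.Sig2 (P + Z) (g.K1 P))ᵀ * (g.R22P (P + Z))⁻¹ * g.Sig2 (P + Z) (g.K1 P))
        + (F2 + (g.R22P (P + Z))⁻¹ * g.Sig2 (P + Z) (g.K1 P))ᵀ * g.R22P (P + Z)
          * (F2 + (g.R22P (P + Z))⁻¹ * g.Sig2 (P + Z) (g.K1 P)) := by abel
    _ = _ := by rw [h3, zero_add]

lemma hS1zero (hu0 : IsUnit (g.RP 0).det) :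
    g.S1 = -(g.R11 * g.K1 0 + g.R12 * g.K2 0) := by
  have h := g.K_rel1 (Y := 0) hu0
  rw [g.S1P_zero, g.R11P_zero, g.R12P_zero] at h
  rw [h, neg_neg]

lemma hS2zero (hu0 : IsUnit (g.RP 0).det) :
    g.S2 = -(g.R12ᵀ * g.K1 0 + g.R22 * g.K2 0) := by
  have h := g.K_rel2 (Y := 0) hu0
  rw [g.S2P_zero, g.R21P_zero, g.R22P_zero] at h
  rw [h, neg_neg]

lemma Sig1_L (hu0 : IsUnit (g.RP 0).det) (L : Matrix (Fin m2) (Fin n) ℝ)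
    (Pt : Matrix (Fin n) (Fin n) ℝ) :
    g.Sig1 Pt (g.K2 0 + L) = g.S1L L Pt - g.R11P Pt * g.K1 0 := by
  simp only [Sig1, S1L, CL, SL, S1P, R12P, R11P, g.hS1zero hu0, sub_eq_add_neg, neg_add,
    neg_neg, Matrix.add_mul, Matrix.mul_add, Matrix.neg_mul, Matrix.mul_neg,
    Matrix.sum_mul, Matrix.mul_sum, Finset.sum_add_distrib, Finset.sum_neg_distrib,
    Matrix.mul_assoc]
  abel

lemma A2 (hu0 : IsUnit (g.RP 0).det) (L : Matrix (Fin m2) (Fin n) ℝ)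
    {Pt : Matrix (Fin n) (Fin n) ℝ} (hPt : Ptᵀ = Pt) (hu1 : IsUnit (g.R11P Pt).det) :
    g.Gam1 Pt (g.K2 0 + L)
      - (g.Sig1 Pt (g.K2 0 + L))ᵀ * (g.R11P Pt)⁻¹ * g.Sig1 Pt (g.K2 0 + L)
      = g.AREL L Pt := by
  rw [g.Sig1_L hu0, inv_quad_expand _ _ _ (g.R11P_transpose hPt) hu1, AREL]
  have hsrs := g.SRS (Y := 0) (by simp) hu0
  rw [g.R11P_zero, g.R12P_zero, g.R21P_zero, g.R22P_zero] at hsrs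
  simp only [Gam1, QL, AL, CL, SL, S1L, R11P, hsrs, g.hS2zero hu0,
    sub_eq_add_neg, neg_add, neg_neg,
    Matrix.transpose_add, Matrix.transpose_neg, Matrix.transpose_mul,
    Matrix.transpose_sum, Matrix.transpose_transpose,
    Matrix.add_mul, Matrix.mul_add, Matrix.neg_mul, Matrix.mul_neg,
    Matrix.sum_mul, Matrix.mul_sum, Finset.sum_add_distrib, Finset.sum_neg_distrib,
    Matrix.mul_assoc, hPt, g.hR11.eq, g.hR22.eq]
  abel

lemma mainA (hu0 : IsUnit (g.RP 0).det) (L : Matrix (Fin m2) (Fin n) ℝ)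
    {Pt : Matrix (Fin n) (Fin n) ℝ} (hPt : Ptᵀ = Pt) (hu1 : IsUnit (g.R11P Pt).det)
    (hare : g.AREL L Pt = 0) (F1 : Matrix (Fin m1) (Fin n) ℝ) :
    g.Dd Pt F1 (g.K2 0 + L) =
      (F1 + (g.R11P Pt)⁻¹ * g.Sig1 Pt (g.K2 0 + L))ᵀ * g.R11P Pt
        * (F1 + (g.R11P Pt)⁻¹ * g.Sig1 Pt (g.K2 0 + L)) := by
  have hc := comp_sq (g.R11P Pt) (g.Sig1 Pt (g.K2 0 + L)) F1 (g.R11P_transpose hPt) hu1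
  have h1 : g.Dd Pt F1 (g.K2 0 + L) = g.Gam1 Pt (g.K2 0 + L)
      + (F1ᵀ * g.Sig1 Pt (g.K2 0 + L) + (g.Sig1 Pt (g.K2 0 + L))ᵀ * F1
          + F1ᵀ * g.R11P Pt * F1) := by
    rw [g.E2 hPt]; abel
  rw [h1, hc]
  have h3 := g.A2 hu0 L hPt hu1
  rw [hare] at h3
  calc g.Gam1 Pt (g.K2 0 + L)
      + (-((g.Sig1 Pt (g.K2 0 + L))ᵀ * (g.R11P Pt)⁻¹ * g.Sig1 Pt (g.K2 0 + L))
        + (F1 + (g.R11P Pt)⁻¹ * g.Sig1 Pt (g.K2 0 + L))ᵀ * g.R11P Pt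
          * (F1 + (g.R11P Pt)⁻¹ * g.Sig1 Pt (g.K2 0 + L)))
      = (g.Gam1 Pt (g.K2 0 + L)
          - (g.Sig1 Pt (g.K2 0 + L))ᵀ * (g.R11P Pt)⁻¹ * g.Sig1 Pt (g.K2 0 + L))
        + (F1 + (g.R11P Pt)⁻¹ * g.Sig1 Pt (g.K2 0 + L))ᵀ * g.R11P Pt
          * (F1 + (g.R11P Pt)⁻¹ * g.Sig1 Pt (g.K2 0 + L)) := by abel
    _ = _ := by rw [h3, zero_add]

end GameData

end AuxLemmas

/-- Lemma, part (i): under the stated hypotheses, if the closed-loop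
system formed with `K_1(P)` and `K_2(0) + L` is mean-square stable, then `P̃_L ⪰ P + Z`. -/
theorem statement10 {n m1 m2 r : ℕ} (g : GameData n m1 m2 r)
    (hdom0 : g.MemDomG 0)
    (L : Matrix (Fin m2) (Fin n) ℝ) (hL : g.MemA L)
    (Ptilde : Matrix (Fin n) (Fin n) ℝ) (hPtilde : g.IsStabSolL L Ptilde)
    (P Z : Matrix (Fin n) (Fin n) ℝ) (hP : P.IsSymm) (hZ : Z.IsSymm)
    (hdomP : g.MemDomG P) (hdomPZ : g.MemDomG (P + Z))
    (hinner : g.InnerRiccati P Z)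
    (hstable : MSStable
      (g.A + g.B1 * g.K1 P + g.B2 * g.K2 0 + g.B2 * L)
      (fun l => g.C l + g.D1 l * g.K1 P + g.D2 l * g.K2 0 + g.D2 l * L)) :
    (Ptilde - (P + Z)).PosSemidef := by
  obtain ⟨hPts, hare, hR11Pt, -⟩ := hPtilde
  have hu0 : IsUnit (g.RP 0).det := g.RP_isUnit (by simp) hdom0
  have huP : IsUnit (g.RP P).det := g.RP_isUnit hP hdomP
  have hu2 : IsUnit (g.R22P (P + Z)).det :=
    (Matrix.isUnit_iff_isUnit_det _).mp hdomPZ.1.isUnit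
  have hu1 : IsUnit (g.R11P Ptilde).det := by
    have h := hR11Pt.isUnit.neg
    rw [neg_neg] at h
    exact (Matrix.isUnit_iff_isUnit_det _).mp h
  have hA := g.mainA hu0 L hPts hu1 hare (g.K1 P)
  have hB := g.mainB hP hZ huP hu2 hinner (g.K2 0 + L)
  set F1 : Matrix (Fin m1) (Fin n) ℝ := g.K1 P with hF1
  set F2 : Matrix (Fin m2) (Fin n) ℝ := g.K2 0 + L with hF2
  set Δ : Matrix (Fin n) (Fin n) ℝ := Ptilde - (P + Z) with hΔdef
  have hdiff : g.Dd Ptilde F1 F2 = g.Dd (P + Z) F1 F2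
      + (Δ * g.AF F1 F2 + (g.AF F1 F2)ᵀ * Δ + ∑ l, (g.CF F1 F2 l)ᵀ * Δ * g.CF F1 F2 l) := by
    have h := g.Dd_add (Y := P + Z) Δ F1 F2
    have e : P + Z + Δ = Ptilde := by rw [hΔdef]; abel
    rwa [e] at h
  have hFeq : g.AF F1 F2 = g.A + g.B1 * g.K1 P + g.B2 * g.K2 0 + g.B2 * L := by
    rw [GameData.AF, hF1, hF2, Matrix.mul_add]; abel
  have hCeq : ∀ l, g.CF F1 F2 l = g.C l + g.D1 l * g.K1 P + g.D2 l * g.K2 0 + g.D2 l * L := by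
    intro l; rw [GameData.CF, hF1, hF2, Matrix.mul_add]; abel
  apply lyap hstable
  · exact isHermitian_of_isSymm' (by
      rw [Matrix.IsSymm, Matrix.transpose_sub, Matrix.transpose_add, hPts, hP, hZ])
  · have hkey : -(Lop (g.A + g.B1 * g.K1 P + g.B2 * g.K2 0 + g.B2 * L)
        (fun l => g.C l + g.D1 l * g.K1 P + g.D2 l * g.K2 0 + g.D2 l * L) Δ)
        = (F2 + (g.R22P (P + Z))⁻¹ * g.Sig2 (P + Z) F1)ᵀ * g.R22P (P + Z)
            * (F2 + (g.R22P (P + Z))⁻¹ * g.Sig2 (P + Z) F1)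
          + (F1 + (g.R11P Ptilde)⁻¹ * g.Sig1 Ptilde F2)ᵀ * (-(g.R11P Ptilde))
            * (F1 + (g.R11P Ptilde)⁻¹ * g.Sig1 Ptilde F2) := by
      have hLop : Lop (g.A + g.B1 * g.K1 P + g.B2 * g.K2 0 + g.B2 * L)
          (fun l => g.C l + g.D1 l * g.K1 P + g.D2 l * g.K2 0 + g.D2 l * L) Δ
          = Δ * g.AF F1 F2 + (g.AF F1 F2)ᵀ * Δ
            + ∑ l, (g.CF F1 F2 l)ᵀ * Δ * g.CF F1 F2 l := by
        rw [Lop, hFeq]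
        congr 1
        exact Finset.sum_congr rfl fun l _ => by rw [hCeq l]
      rw [hLop]
      have h2 : Δ * g.AF F1 F2 + (g.AF F1 F2)ᵀ * Δ
          + ∑ l, (g.CF F1 F2 l)ᵀ * Δ * g.CF F1 F2 l
          = g.Dd Ptilde F1 F2 - g.Dd (P + Z) F1 F2 := by
        rw [hdiff]; abel
      rw [h2, hA, hB]
      simp only [Matrix.mul_neg, Matrix.neg_mul]
      abel
    rw [hkey]
    have p1 : ((F2 + (g.R22P (P + Z))⁻¹ * g.Sig2 (P + Z) F1)ᵀ * g.R22P (P + Z)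
        * (F2 + (g.R22P (P + Z))⁻¹ * g.Sig2 (P + Z) F1)).PosSemidef := by
      have := hdomPZ.1.posSemidef.conjTranspose_mul_mul_same
        (F2 + (g.R22P (P + Z))⁻¹ * g.Sig2 (P + Z) F1)
      rwa [Matrix.conjTranspose_eq_transpose_of_trivial] at this
    have p2 : ((F1 + (g.R11P Ptilde)⁻¹ * g.Sig1 Ptilde F2)ᵀ * (-(g.R11P Ptilde))
        * (F1 + (g.R11P Ptilde)⁻¹ * g.Sig1 Ptilde F2)).PosSemidef := by
      have := hR11Pt.posSemidef.conjTranspose_mul_mul_same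
        (F1 + (g.R11P Ptilde)⁻¹ * g.Sig1 Ptilde F2)
      rwa [Matrix.conjTranspose_eq_transpose_of_trivial] at this
    exact p1.add p2
end
end
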